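/- arXiv:1312.7225 — 2 statements merged into one kernel-verified Lean document; each statement's English description precedes it below -/
import Mathlib

section
/- Let (X,𝔅,μ,T) be a measure-preserving system and α a finite measurable partition of X. If α admits at least one positive entropy sequence, then the supremum of the upper dimensions D̄(S) over all positive entropy sequences S of α equals 1 (i.e. D̄^p_μ(T,α) = 1); if α admits no positive entropy sequence then D̄^p_μ(T,α) = 0. Consequently D̄^p_μ(X,T) := sup_α D̄^p_μ(T,α) takes only the values 0 or 1, and D̄^p_μ(X,T) = 0 if and only if the system is null. -/
open MeasureTheory Filter Set
open scoped ENNReal symmDiff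

noncomputable section

namespace EntDim

/-- An increasing sequence of positive integers `S = {s 0 < s 1 < ⋯}` (0-indexed,
so `s n` is the `(n+1)`-st element of `S`). -/
def IsPosSeq (s : ℕ → ℕ) : Prop := StrictMono s ∧ 0 < s 0

/-- `D̄(S,τ) = limsup_n n / (s_n)^τ` (with the convention that the `n`-th term,
for `n` starting at `0`, is `(n+1)/(s n)^τ`, matching the 1-indexed definition). -/
def dimExprSup (s : ℕ → ℕ) (τ : ℝ) : ℝ≥0∞ :=
  Filter.atTop.limsup fun n : ℕ => ((n : ℝ≥0∞) + 1) / (s n : ℝ≥0∞) ^ τ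

/-- `D̲(S,τ) = liminf_n n / (s_n)^τ`. -/
def dimExprInf (s : ℕ → ℕ) (τ : ℝ) : ℝ≥0∞ :=
  Filter.atTop.liminf fun n : ℕ => ((n : ℝ≥0∞) + 1) / (s n : ℝ≥0∞) ^ τ

/-- The upper dimension `D̄(S) = inf {τ ≥ 0 | D̄(S,τ) = 0}` of a sequence. -/
def upperDim (s : ℕ → ℕ) : ℝ := sInf {τ : ℝ | 0 ≤ τ ∧ dimExprSup s τ = 0}

/-- The lower dimension `D̲(S) = inf {τ ≥ 0 | D̲(S,τ) = 0}` of a sequence. -/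
def lowerDim (s : ℕ → ℕ) : ℝ := sInf {τ : ℝ | 0 ≤ τ ∧ dimExprInf s τ = 0}

variable {X : Type*} [MeasurableSpace X]

/-- `P : ι → Set X` is a finite measurable partition of `X`. -/
def IsPartition {ι : Type*} [Fintype ι] (P : ι → Set X) : Prop :=
  (∀ i, MeasurableSet (P i)) ∧ Pairwise (Function.onFun Disjoint P) ∧ (⋃ i, P i) = Set.univ

/-- The entropy `H_μ(⋁_{i ∈ F} T^{-f i} P)` of the join of the preimage partitions
`T^{-f i} P` over a finite index set `F`. -/
def finJoinEnt (μ : Measure X) (T : X → X) {ι : Type*} [Fintype ι] (P : ι → Set X)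
    (f : ℕ → ℕ) (F : Finset ℕ) : ℝ :=
  ∑ ω : F → ι, Real.negMulLog (μ (⋂ i : F, T^[f i.1] ⁻¹' (P (ω i)))).toReal

/-- `H_μ(⋁_{i=1}^{n} T^{-s_i} P)` (with `s` 0-indexed: this is the join over the
first `n` elements of the sequence). -/
def seqJoinEnt (μ : Measure X) (T : X → X) {ι : Type*} [Fintype ι] (P : ι → Set X)
    (s : ℕ → ℕ) (n : ℕ) : ℝ :=
  finJoinEnt μ T P s (Finset.range n)

/-- `S` is an entropy generating sequence of the partition `P`:
`liminf_n (1/n) H_μ(⋁_{i=1}^n T^{-s_i} P) > 0`. -/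
def IsEntGenSeq (μ : Measure X) (T : X → X) {ι : Type*} [Fintype ι] (P : ι → Set X)
    (s : ℕ → ℕ) : Prop :=
  IsPosSeq s ∧ 0 < Filter.atTop.liminf fun n : ℕ => seqJoinEnt μ T P s n / n

/-- `S` is a positive entropy sequence of the partition `P`:
`limsup_n (1/n) H_μ(⋁_{i=1}^n T^{-s_i} P) > 0`. -/
def IsPosEntSeq (μ : Measure X) (T : X → X) {ι : Type*} [Fintype ι] (P : ι → Set X)
    (s : ℕ → ℕ) : Prop :=
  IsPosSeq s ∧ 0 < Filter.atTop.limsup fun n : ℕ => seqJoinEnt μ T P s n / n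

/-- `D̄^e_μ(T,P)`: the supremum of upper dimensions over entropy generating sequences
of `P` (`0`, by convention `sSup ∅ = 0`, if there are none). This is the upper
entropy dimension `D̄_μ(T,P)` of the partition `P`. -/
def upperEntDimPart (μ : Measure X) (T : X → X) {ι : Type*} [Fintype ι]
    (P : ι → Set X) : ℝ :=
  sSup {d : ℝ | ∃ s : ℕ → ℕ, IsEntGenSeq μ T P s ∧ d = upperDim s}

/-- `D̲^e_μ(T,P)`: the supremum of lower dimensions over entropy generating sequences,
i.e. the lower entropy dimension `D̲_μ(T,P)` of the partition `P`. -/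
def lowerEntDimPart (μ : Measure X) (T : X → X) {ι : Type*} [Fintype ι]
    (P : ι → Set X) : ℝ :=
  sSup {d : ℝ | ∃ s : ℕ → ℕ, IsEntGenSeq μ T P s ∧ d = lowerDim s}

/-- `D̄^p_μ(T,P)`: the supremum of upper dimensions over positive entropy sequences of `P`. -/
def upperPosDimPart (μ : Measure X) (T : X → X) {ι : Type*} [Fintype ι]
    (P : ι → Set X) : ℝ :=
  sSup {d : ℝ | ∃ s : ℕ → ℕ, IsPosEntSeq μ T P s ∧ d = upperDim s}

/-- `D̲^p_μ(T,P)`: the supremum of lower dimensions over positive entropy sequences of `P`. -/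
def lowerPosDimPart (μ : Measure X) (T : X → X) {ι : Type*} [Fintype ι]
    (P : ι → Set X) : ℝ :=
  sSup {d : ℝ | ∃ s : ℕ → ℕ, IsPosEntSeq μ T P s ∧ d = lowerDim s}

/-- The upper metric entropy dimension `D̄_μ(X,T)`: the supremum of `D̄_μ(T,P)`
over all finite measurable partitions `P` of `X`. -/
def upperEntDim (μ : Measure X) (T : X → X) : ℝ :=
  sSup {d : ℝ | ∃ (k : ℕ) (P : Fin k → Set X), IsPartition P ∧ d = upperEntDimPart μ T P}

/-- The lower metric entropy dimension `D̲_μ(X,T)`. -/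
def lowerEntDim (μ : Measure X) (T : X → X) : ℝ :=
  sSup {d : ℝ | ∃ (k : ℕ) (P : Fin k → Set X), IsPartition P ∧ d = lowerEntDimPart μ T P}

/-- `D̄^p_μ(X,T)`: the supremum of `D̄^p_μ(T,P)` over all finite measurable partitions. -/
def upperPosDim (μ : Measure X) (T : X → X) : ℝ :=
  sSup {d : ℝ | ∃ (k : ℕ) (P : Fin k → Set X), IsPartition P ∧ d = upperPosDimPart μ T P}

/-- The two-set partition `{A, X \ A}`. -/
def pairPart (A : Set X) : Fin 2 → Set X := ![A, Aᶜ]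

/-- The dimension set `Dims_μ(X,T) = {D̄_μ(T,{A,Aᶜ}) : A ∈ 𝔅, 0 < μ(A) < 1}`. -/
def dimsSet (μ : Measure X) (T : X → X) : Set ℝ :=
  {d : ℝ | ∃ A : Set X, MeasurableSet A ∧ 0 < μ A ∧ μ A < 1 ∧
    d = upperEntDimPart μ T (pairPart A)}

/-- The system is null: every sequence entropy (along any increasing sequence of
positive integers, for any finite measurable partition) vanishes. -/
def IsNullSystem (μ : Measure X) (T : X → X) : Prop :=
  ∀ (k : ℕ) (P : Fin k → Set X), IsPartition P → ∀ s : ℕ → ℕ, IsPosSeq s →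
    Filter.atTop.limsup (fun n : ℕ => seqJoinEnt μ T P s n / n) = 0

end EntDim


namespace EntDim
set_option linter.unusedSectionVars false
set_option linter.unusedVariables false
noncomputable section

section Analysis

-- subadditivity of negMulLog
lemma negMulLog_add_le {a b : ℝ} (ha : 0 ≤ a) (hb : 0 ≤ b) :
    Real.negMulLog (a + b) ≤ Real.negMulLog a + Real.negMulLog b := by
  rcases eq_or_lt_of_le ha with h | h
  · simp [← h]
  rcases eq_or_lt_of_le hb with h' | h'
  · simp [← h']
  have h1 : -a * Real.log (a + b) ≤ -a * Real.log a := by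
    have := Real.log_le_log h (le_add_of_nonneg_right hb)
    nlinarith
  have h2 : -b * Real.log (a + b) ≤ -b * Real.log b := by
    have := Real.log_le_log h' (le_add_of_nonneg_left ha)
    nlinarith
  simp only [Real.negMulLog]
  nlinarith

lemma negMulLog_sum_le {κ : Type*} (t : Finset κ) (p : κ → ℝ) (h0 : ∀ a, 0 ≤ p a) :
    Real.negMulLog (∑ i ∈ t, p i) ≤ ∑ i ∈ t, Real.negMulLog (p i) := by
  classical
  induction t using Finset.induction with
  | empty => simp
  | insert a s hx ih =>
    rw [Finset.sum_insert hx, Finset.sum_insert hx]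
    calc Real.negMulLog (p a + ∑ i ∈ s, p i)
        ≤ Real.negMulLog (p a) + Real.negMulLog (∑ i ∈ s, p i) :=
          negMulLog_add_le (h0 a) (Finset.sum_nonneg fun i _ => h0 i)
      _ ≤ _ := by linarith

lemma sum_negMulLog_le {κ : Type*} [Fintype κ] (p : κ → ℝ) (h0 : ∀ a, 0 ≤ p a)
    (h1 : ∑ a, p a ≤ 1) :
    ∑ a, Real.negMulLog (p a) ≤ Real.log (Fintype.card κ) + 1 := by
  classical
  rcases isEmpty_or_nonempty κ with h | h
  · simp [Real.log_nonneg]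
  set N : ℝ := (Fintype.card κ : ℝ) with hN
  have hNpos : 0 < N := by
    have := Fintype.card_pos (α := κ); positivity
  have key : ∀ a, Real.negMulLog (p a) ≤ p a * Real.log N + 1 / N - p a := by
    intro a
    rcases eq_or_lt_of_le (h0 a) with h' | h'
    · simp only [← h', Real.negMulLog_zero]
      have : (0:ℝ) < 1 / N := by positivity
      linarith
    · have hlog : Real.log (1 / (p a * N)) ≤ 1 / (p a * N) - 1 :=
        Real.log_le_sub_one_of_pos (by positivity)
      have hsplit : Real.negMulLog (p a) = p a * Real.log N + p a * Real.log (1 / (p a * N)) := by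
        rw [Real.negMulLog, Real.log_div (by norm_num) (by positivity), Real.log_mul (ne_of_gt h') (ne_of_gt hNpos)]
        simp only [Real.log_one]
        ring
      rw [hsplit]
      have : p a * Real.log (1 / (p a * N)) ≤ p a * (1 / (p a * N) - 1) :=
        mul_le_mul_of_nonneg_left hlog (h0 a)
      have heq : p a * (1 / (p a * N) - 1) = 1 / N - p a := by
        field_simp
      linarith [heq ▸ this]
  calc ∑ a, Real.negMulLog (p a) ≤ ∑ a, (p a * Real.log N + 1 / N - p a) :=
        Finset.sum_le_sum fun a _ => key a
    _ = (∑ a, p a) * Real.log N + (Fintype.card κ) * (1/N) - ∑ a, p a := by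
        rw [Finset.sum_sub_distrib, Finset.sum_add_distrib, ← Finset.sum_mul,
          Finset.sum_const, Finset.card_univ, nsmul_eq_mul]
    _ ≤ Real.log N + 1 := by
        have hlogN : 0 ≤ Real.log N := Real.log_nonneg (by
          have : (1:ℕ) ≤ Fintype.card κ := Fintype.card_pos
          rw [hN]; exact_mod_cast this)
        have hsum0 : 0 ≤ ∑ a, p a := Finset.sum_nonneg fun a _ => h0 a
        have : (Fintype.card κ : ℝ) * (1/N) = 1 := mul_one_div_cancel hNpos.ne'
        nlinarith [mul_le_mul_of_nonneg_right h1 hlogN]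

end Analysis

section Dim

lemma limsup_nonneg_of_nonneg {u : ℕ → ℝ} (h : ∀ n, 0 ≤ u n) :
    0 ≤ Filter.atTop.limsup u := by
  rw [Filter.limsup_eq]
  apply Real.sInf_nonneg
  intro a ha
  simp only [Set.mem_setOf_eq] at ha
  obtain ⟨n, hn⟩ := ha.exists
  exact le_trans (h n) hn

lemma frequently_le_of_lt_limsup {u : ℕ → ℝ} (h0 : ∀ n, 0 ≤ u n) {c : ℝ}
    (hc : c < Filter.atTop.limsup u) : ∃ᶠ n in Filter.atTop, c ≤ u n := by
  by_contra hcon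
  rw [Filter.not_frequently] at hcon
  have hev : ∀ᶠ n in Filter.atTop, u n ≤ c := hcon.mono fun n hn => le_of_not_ge hn
  have hle : Filter.atTop.limsup u ≤ c := by
    rw [Filter.limsup_eq]
    refine csInf_le ⟨0, fun a ha => ?_⟩ hev
    obtain ⟨n, hn⟩ := ha.exists
    exact le_trans (h0 n) hn
  linarith

lemma le_ennreal_limsup {u : ℕ → ℝ≥0∞} {c : ℝ≥0∞} (h : ∃ᶠ n in Filter.atTop, c ≤ u n) :
    c ≤ Filter.atTop.limsup u :=
  Filter.le_limsup_of_frequently_le h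

lemma strictMono_add_le {s : ℕ → ℕ} (hs : StrictMono s) (n : ℕ) : s 0 + n ≤ s n := by
  induction n with
  | zero => simp
  | succ n ih => have h2 : s n < s (n + 1) := hs (by omega); omega

lemma one_le_seq {s : ℕ → ℕ} (hs : IsPosSeq s) (n : ℕ) : 1 ≤ s n := by
  have h1 := hs.1.monotone (Nat.zero_le n)
  have := hs.2; omega

lemma dimExprSup_eq_zero {s : ℕ → ℕ} (hs : IsPosSeq s) {τ : ℝ} (hτ : 1 < τ) :
    dimExprSup s τ = 0 := by
  have hsn : ∀ n : ℕ, ((n : ℝ≥0∞) + 1) ≤ (s n : ℝ≥0∞) := by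
    intro n
    have h1 : n + 1 ≤ s n := by have := strictMono_add_le hs.1 n; have := hs.2; omega
    calc ((n : ℝ≥0∞) + 1) = ((n + 1 : ℕ) : ℝ≥0∞) := by push_cast; ring
      _ ≤ _ := by exact_mod_cast h1
  have hb : ∀ n : ℕ, ((n : ℝ≥0∞) + 1) / (s n : ℝ≥0∞) ^ τ ≤ ((n : ℝ≥0∞) + 1) ^ (1 - τ) := by
    intro n
    have hne0 : ((n : ℝ≥0∞) + 1) ≠ 0 := by simp
    have hnetop : ((n : ℝ≥0∞) + 1) ≠ ⊤ := by simp
    have heq : ((n : ℝ≥0∞) + 1) ^ (1 - τ) = ((n : ℝ≥0∞) + 1) / ((n : ℝ≥0∞) + 1) ^ τ := by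
      rw [sub_eq_add_neg, ENNReal.rpow_add _ _ hne0 hnetop, ENNReal.rpow_one,
        ENNReal.rpow_neg, div_eq_mul_inv]
    rw [heq]
    apply ENNReal.div_le_div_left
    exact ENNReal.rpow_le_rpow (hsn n) (by linarith)
  have htop : Filter.Tendsto (fun n : ℕ => ((n : ℝ≥0∞) + 1)) Filter.atTop (nhds ⊤) := by
    have h1 : Filter.Tendsto (fun n : ℕ => (n : ℝ≥0∞)) Filter.atTop (nhds ⊤) :=
      ENNReal.tendsto_nat_nhds_top
    have h2 : Filter.Tendsto (fun x : ℝ≥0∞ => x + 1) (nhds ⊤) (nhds ⊤) := by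
      have := (continuous_id.add (continuous_const (y := (1:ℝ≥0∞)))).tendsto ⊤
      simpa only [Pi.add_def, id_eq, top_add] using this
    exact h2.comp h1
  have htend : Filter.Tendsto (fun n : ℕ => ((n : ℝ≥0∞) + 1) ^ (1 - τ)) Filter.atTop (nhds 0) := by
    have h2 : Filter.Tendsto (fun x : ℝ≥0∞ => x ^ (1 - τ)) (nhds ⊤) (nhds 0) := by
      have := (ENNReal.continuous_rpow_const (y := 1 - τ)).tendsto ⊤
      rwa [ENNReal.top_rpow_of_neg (by linarith)] at this
    exact h2.comp htop
  have : Filter.Tendsto (fun n : ℕ => ((n : ℝ≥0∞) + 1) / (s n : ℝ≥0∞) ^ τ)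
      Filter.atTop (nhds 0) :=
    tendsto_of_tendsto_of_tendsto_of_le_of_le tendsto_const_nhds htend
      (fun n => zero_le) hb
  exact this.limsup_eq

lemma upperDim_nonneg (s : ℕ → ℕ) : 0 ≤ upperDim s :=
  Real.sInf_nonneg fun τ hτ => hτ.1

lemma upperDim_le_one {s : ℕ → ℕ} (hs : IsPosSeq s) : upperDim s ≤ 1 := by
  refine le_of_forall_pos_le_add fun ε hε => ?_
  refine csInf_le ⟨0, fun τ hτ => hτ.1⟩ ?_
  exact ⟨by linarith, dimExprSup_eq_zero hs (by linarith)⟩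

lemma upperDim_eq_one {s : ℕ → ℕ} (hs : IsPosSeq s)
    (hd : ∀ K : ℕ, ∃ n, K ≤ n ∧ s n ≤ 2 * (n + 1)) : upperDim s = 1 := by
  refine le_antisymm (upperDim_le_one hs) ?_
  refine le_csInf ⟨2, by norm_num, dimExprSup_eq_zero hs one_lt_two⟩ ?_
  rintro τ ⟨hτ0, hτ⟩
  by_contra hlt
  push_neg at hlt
  have hfreq : ∃ᶠ n : ℕ in Filter.atTop, (2 : ℝ≥0∞)⁻¹ ≤ ((n : ℝ≥0∞) + 1) / (s n : ℝ≥0∞) ^ τ := by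
    refine Filter.frequently_atTop.2 fun K => ?_
    obtain ⟨n, hnK, hn⟩ := hd K
    refine ⟨n, hnK, ?_⟩
    have hs1 : (1 : ℝ≥0∞) ≤ (s n : ℝ≥0∞) := by exact_mod_cast one_le_seq hs n
    have h1 : ((s n : ℝ≥0∞)) ^ τ ≤ (s n : ℝ≥0∞) := by
      calc ((s n : ℝ≥0∞)) ^ τ ≤ (s n : ℝ≥0∞) ^ (1 : ℝ) :=
            ENNReal.rpow_le_rpow_of_exponent_le hs1 (le_of_lt hlt)
        _ = _ := ENNReal.rpow_one _
    have hpow0 : ((s n : ℝ≥0∞)) ^ τ ≠ 0 :=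
      ne_of_gt (ENNReal.rpow_pos (lt_of_lt_of_le zero_lt_one hs1) (by simp))
    have hpowtop : ((s n : ℝ≥0∞)) ^ τ ≠ ⊤ :=
      ENNReal.rpow_ne_top_of_nonneg hτ0 (by simp)
    rw [ENNReal.le_div_iff_mul_le (Or.inl hpow0) (Or.inl hpowtop)]
    have hd1 : (s n : ℝ≥0∞) ≤ 2 * ((n : ℝ≥0∞) + 1) := by
      calc (s n : ℝ≥0∞) ≤ ((2 * (n + 1) : ℕ) : ℝ≥0∞) := by exact_mod_cast hn
        _ = 2 * ((n : ℝ≥0∞) + 1) := by push_cast; ring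
    calc (2 : ℝ≥0∞)⁻¹ * (s n : ℝ≥0∞) ^ τ ≤ 2⁻¹ * (s n : ℝ≥0∞) := by
          exact mul_le_mul_right h1 _
      _ ≤ 2⁻¹ * (2 * ((n : ℝ≥0∞) + 1)) := mul_le_mul_right hd1 _
      _ = (n : ℝ≥0∞) + 1 := by
          rw [← mul_assoc, ENNReal.inv_mul_cancel two_ne_zero ENNReal.ofNat_ne_top, one_mul]
  have h2 : (2 : ℝ≥0∞)⁻¹ ≤ dimExprSup s τ := le_ennreal_limsup hfreq
  rw [hτ] at h2
  simp at h2

end Dim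

section Lists
variable (s g : ℕ → ℕ)

def nextList (l : List ℕ) : List ℕ :=
  l ++ (((List.range (g (l.length + 1))).map fun i => (l.foldr max 0 + 1) + s i) ++
    (List.range ((l.foldr max 0 + 1) + s (g (l.length + 1) - 1) + 1)).map
      fun i => ((l.foldr max 0 + 1) + s (g (l.length + 1) - 1) + 1) + i)

def stages : ℕ → List ℕ := fun k => (nextList s g)^[k] []

def spSeq (n : ℕ) : ℕ := (stages s g (n + 1)).getD n 0

variable {s g}

lemma le_foldr_max (l : List ℕ) : ∀ x ∈ l, x ≤ l.foldr max 0 := by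
  induction l with
  | nil => simp
  | cons a t ih =>
    intro x hx
    rcases List.mem_cons.1 hx with h | h
    · simp [h, List.foldr_cons, le_max_iff]
    · exact le_trans (ih x h) (by simp [List.foldr_cons, le_max_iff])

lemma stages_succ (k : ℕ) : stages s g (k + 1) = nextList s g (stages s g k) := by
  simp [stages, Function.iterate_succ_apply']

lemma stages_prefix (k : ℕ) : stages s g k <+: stages s g (k + 1) := by
  rw [stages_succ]; exact ⟨_, rfl⟩

lemma stages_prefix_le {k j : ℕ} (h : k ≤ j) : stages s g k <+: stages s g j := by
  induction j with
  | zero => simpa [Nat.le_zero.1 h] using List.prefix_refl _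
  | succ j ih =>
    rcases Nat.lt_or_ge k (j + 1) with h' | h'
    · exact (ih (by omega)).trans (stages_prefix j)
    · have : k = j + 1 := by omega
      simp [this]

lemma length_nextList (l : List ℕ) (hg : ∀ m, m ≤ g m) :
    l.length + 1 ≤ (nextList s g l).length := by
  have h1 : 1 ≤ g (l.length + 1) := le_trans (by omega) (hg (l.length + 1))
  simp [nextList]
  omega

lemma length_stages (hg : ∀ m, m ≤ g m) (k : ℕ) : k ≤ (stages s g k).length := by
  induction k with
  | zero => simp
  | succ k ih =>
    rw [stages_succ]
    exact le_trans (by omega) (length_nextList _ hg)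

lemma sorted_stages (hs : StrictMono s) (hg : ∀ m, m ≤ g m) (k : ℕ) :
    (stages s g k).Pairwise (· < ·) := by
  induction k with
  | zero => simp [stages]
  | succ k ih =>
    rw [stages_succ]
    set l := stages s g k
    set m := l.length
    set v := l.foldr max 0 + 1 with hv
    set n := g (m + 1)
    set w := v + s (n - 1) + 1 with hw
    have hB : ((List.range n).map fun i => v + s i).Pairwise (· < ·) := by
      rw [List.pairwise_map]
      exact (List.pairwise_lt_range (n := n)).imp fun h => by
        have := hs h; omega
    have hC : ((List.range w).map fun i => w + i).Pairwise (· < ·) := by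
      rw [List.pairwise_map]
      exact (List.pairwise_lt_range (n := w)).imp fun h => by omega
    have hnl : nextList s g l = l ++ (((List.range n).map fun i => v + s i) ++
        (List.range w).map fun i => w + i) := rfl
    rw [hnl, List.pairwise_append]
    refine ⟨ih, ?_, ?_⟩
    · rw [List.pairwise_append]
      refine ⟨hB, hC, ?_⟩
      intro a ha b hb
      obtain ⟨i, hi, rfl⟩ := List.mem_map.1 ha
      obtain ⟨j, hj, rfl⟩ := List.mem_map.1 hb
      have hi' : i < n := List.mem_range.1 hi
      have : s i ≤ s (n - 1) := hs.monotone (by omega)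
      omega
    · intro a ha b hb
      have ha' : a ≤ l.foldr max 0 := le_foldr_max l a ha
      rcases List.mem_append.1 hb with h | h
      · obtain ⟨i, hi, rfl⟩ := List.mem_map.1 h
        omega
      · obtain ⟨j, hj, rfl⟩ := List.mem_map.1 h
        omega

lemma spSeq_eq_getElem (hg : ∀ m, m ≤ g m) {n k : ℕ} (h : n < (stages s g k).length) :
    spSeq s g n = (stages s g k)[n] := by
  have h1 : n < (stages s g (n + 1)).length := lt_of_lt_of_le (by omega) (length_stages hg (n + 1))
  rw [spSeq, List.getD_eq_getElem _ _ h1]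
  rcases Nat.le_total (n + 1) k with h' | h'
  · exact (stages_prefix_le h').getElem h1
  · exact ((stages_prefix_le h').getElem h).symm

def icoEquiv (m n : ℕ) : ↥(Finset.range n) ≃ ↥(Finset.Ico m (m + n)) where
  toFun i := ⟨m + i.1, by
    have := Finset.mem_range.1 i.2
    simp only [Finset.mem_Ico]; omega⟩
  invFun j := ⟨j.1 - m, by
    have := Finset.mem_Ico.1 j.2
    simp only [Finset.mem_range]; omega⟩
  left_inv i := by ext; simp
  right_inv j := by
    have := Finset.mem_Ico.1 j.2
    ext; simp; omega

@[simp] lemma icoEquiv_apply (m n : ℕ) (i : ↥(Finset.range n)) :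
    ((icoEquiv m n) i).1 = m + i.1 := rfl

lemma spSeq_strictMono (hs : StrictMono s) (hg : ∀ m, m ≤ g m) : StrictMono (spSeq s g) := by
  intro a b hab
  have hb : b < (stages s g (b + 1)).length :=
    lt_of_lt_of_le (by omega) (length_stages hg (b + 1))
  have ha : a < (stages s g (b + 1)).length := by omega
  rw [spSeq_eq_getElem hg ha, spSeq_eq_getElem hg hb]
  exact List.pairwise_iff_getElem.1 (sorted_stages hs hg (b + 1)) a b ha hb hab

lemma stage_spec (hs : StrictMono s) (hg : ∀ m, m ≤ g m) (k : ℕ) :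
    ∃ m v n w : ℕ,
      m = (stages s g k).length ∧ k ≤ m ∧ n = g (m + 1) ∧ 1 ≤ v ∧ 1 ≤ w ∧
      (∀ j, j < n → spSeq s g (m + j) = v + s j) ∧
      w ≤ m + n + w ∧
      spSeq s g (m + n + w - 1) = 2 * w - 1 := by
  classical
  set l := stages s g k with hl
  set m := l.length with hm
  set v := l.foldr max 0 + 1 with hv
  set n := g (m + 1) with hn
  set w := v + s (n - 1) + 1 with hw
  have h1n : 1 ≤ n := le_trans (by omega) (hg (m + 1))
  set B := (List.range n).map (fun i => v + s i) with hB
  set C := (List.range w).map (fun i => w + i) with hC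
  have hnl : stages s g (k + 1) = l ++ (B ++ C) := by rw [stages_succ]; rfl
  have hBlen : B.length = n := by simp [hB]
  have hClen : C.length = w := by simp [hC]
  have hlen : (stages s g (k + 1)).length = m + n + w := by
    rw [hnl]; simp only [List.length_append, hBlen, hClen]; omega
  have hval : ∀ j, j < n → spSeq s g (m + j) = v + s j := by
    intro j hj
    have hlt : m + j < (stages s g (k + 1)).length := by omega
    have h2 : (stages s g (k + 1))[m + j]? = some (v + s j) := by
      rw [hnl, List.getElem?_append_right (by omega : l.length ≤ m + j),
        show m + j - l.length = j from by omega,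
        List.getElem?_append, if_pos (by omega : j < B.length), hB,
        List.getElem?_map, List.getElem?_range hj, Option.map_some]
    have h3 := List.getElem?_eq_getElem hlt
    rw [spSeq_eq_getElem hg hlt]
    rw [h3] at h2
    exact Option.some.inj h2
  refine ⟨m, v, n, w, hm, le_trans (length_stages hg k) (le_of_eq hm.symm), rfl, by omega,
    by omega, hval, by omega, ?_⟩
  · have hlt : m + n + w - 1 < (stages s g (k + 1)).length := by omega
    have h2 : (stages s g (k + 1))[m + n + w - 1]? = some (2 * w - 1) := by
      rw [hnl, List.getElem?_append_right (by omega : l.length ≤ m + n + w - 1),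
        show m + n + w - 1 - l.length = n + w - 1 from by omega,
        List.getElem?_append, if_neg (by omega : ¬ (n + w - 1 < B.length)),
        show n + w - 1 - B.length = w - 1 from by omega, hC,
        List.getElem?_map, List.getElem?_range (by omega : w - 1 < w), Option.map_some]
      congr 1
      omega
    have h3 := List.getElem?_eq_getElem hlt
    rw [spSeq_eq_getElem hg hlt]
    rw [h3] at h2
    exact Option.some.inj h2

lemma stages_zero_length : (stages s g 0).length = 0 := by simp [stages]

lemma spSeq_pos (hs : StrictMono s) (hg : ∀ m, m ≤ g m) (hs0 : 0 < s 0) :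
    0 < spSeq s g 0 := by
  obtain ⟨m, v, n, w, hm, hkm, hn, hv, hw, hval, _, _⟩ := stage_spec hs hg 0
  have hm0 : m = 0 := by rw [hm, stages_zero_length]
  have h1n : 1 ≤ n := hn ▸ le_trans (by omega) (hg (m + 1))
  have h := hval 0 (by omega)
  rw [hm0] at h
  simp only [Nat.add_zero, Nat.zero_add] at h
  omega

end Lists

section Measures
variable {X : Type*} [MeasurableSpace X] {μ : MeasureTheory.Measure X} {T : X → X}
  {ι : Type*} [Fintype ι] {P : ι → Set X} {f : ℕ → ℕ} {F : Finset ℕ}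

/-- The atom of the join partition. -/
def atom (T : X → X) (P : ι → Set X) (f : ℕ → ℕ) (F : Finset ℕ) (ω : F → ι) : Set X :=
  ⋂ i : F, T^[f i.1] ⁻¹' (P (ω i))

lemma finJoinEnt_eq (μ : Measure X) (T : X → X) (P : ι → Set X) (f : ℕ → ℕ) (F : Finset ℕ) :
    finJoinEnt μ T P f F = ∑ ω : F → ι, Real.negMulLog (μ (atom T P f F ω)).toReal := rfl

lemma atom_measurableSet (hT : Measurable T) (hP : ∀ i, MeasurableSet (P i))
    (ω : F → ι) : MeasurableSet (atom T P f F ω) :=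
  MeasurableSet.iInter fun i => (hT.iterate _) (hP _)

lemma atom_disjoint (hP : Pairwise (Function.onFun Disjoint P))
    {ω ω' : F → ι} (h : ω ≠ ω') : Disjoint (atom T P f F ω) (atom T P f F ω') := by
  obtain ⟨i, hi⟩ : ∃ i, ω i ≠ ω' i := by
    by_contra hc; push_neg at hc; exact h (funext hc)
  exact Set.disjoint_of_subset (Set.iInter_subset _ i) (Set.iInter_subset _ i)
    ((hP hi).preimage _)

lemma sum_atom_le_one [IsProbabilityMeasure μ] (hT : Measurable T) (hP : IsPartition P)
    (f : ℕ → ℕ) (F : Finset ℕ) : ∑ ω : F → ι, μ (atom T P f F ω) ≤ 1 := by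
  classical
  rw [← tsum_fintype (L := SummationFilter.unconditional _),
    ← measure_iUnion (fun ω ω' h => atom_disjoint hP.2.1 h)
      (fun ω => atom_measurableSet hT hP.1 ω)]
  exact prob_le_one

lemma toReal_le_one [IsProbabilityMeasure μ] (A : Set X) : (μ A).toReal ≤ 1 := by
  have := ENNReal.toReal_mono (by simp) (prob_le_one (μ := μ) (s := A))
  simpa using this

lemma finJoinEnt_nonneg [IsProbabilityMeasure μ] : 0 ≤ finJoinEnt μ T P f F :=
  Finset.sum_nonneg fun ω _ =>
    Real.negMulLog_nonneg ENNReal.toReal_nonneg (toReal_le_one _)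

lemma finJoinEnt_le [IsProbabilityMeasure μ] (hT : Measurable T) (hP : IsPartition P) :
    finJoinEnt μ T P f F ≤ Real.log (Fintype.card (F → ι)) + 1 := by
  classical
  rw [finJoinEnt_eq]
  refine sum_negMulLog_le _ (fun ω => ENNReal.toReal_nonneg) ?_
  rw [← ENNReal.toReal_sum (fun ω _ => measure_ne_top μ _)]
  have h1 := sum_atom_le_one (μ := μ) hT hP f F
  have := ENNReal.toReal_mono (by simp) h1
  simpa using this

lemma finJoinEnt_mono [IsProbabilityMeasure μ] (hT : Measurable T) (hP : IsPartition P)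
    (f : ℕ → ℕ) {F G : Finset ℕ} (hFG : F ⊆ G) :
    finJoinEnt μ T P f F ≤ finJoinEnt μ T P f G := by
  classical
  set r : (G → ι) → (F → ι) := fun ω i => ω ⟨i.1, hFG i.2⟩ with hr
  have hdecomp : ∀ ω₀ : F → ι,
      atom T P f F ω₀ =
        ⋃ ω ∈ Finset.univ.filter (fun ω : G → ι => r ω = ω₀), atom T P f G ω := by
    intro ω₀
    apply Set.Subset.antisymm
    · intro x hx
      have hcov : ∀ i : G, ∃ j : ι, T^[f i.1] x ∈ P j := by
        intro i
        have : T^[f i.1] x ∈ ⋃ j, P j := by rw [hP.2.2]; trivial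
        simpa using this
      choose c hc using hcov
      set ω : G → ι := fun i => if h : i.1 ∈ F then ω₀ ⟨i.1, h⟩ else c i with hω
      have hmem : x ∈ atom T P f G ω := by
        refine Set.mem_iInter.2 fun i => ?_
        by_cases h : i.1 ∈ F
        · have := Set.mem_iInter.1 hx ⟨i.1, h⟩
          simpa [hω, h] using this
        · simpa [hω, h] using hc i
      have hrω : r ω = ω₀ := by
        funext i
        simp [hr, hω, i.2]
      exact Set.mem_biUnion (Finset.mem_filter.2 ⟨Finset.mem_univ _, hrω⟩) hmem
    · intro x hx
      simp only [Set.mem_iUnion, Finset.mem_filter, Finset.mem_univ, true_and] at hx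
      obtain ⟨ω, hω, hx⟩ := hx
      refine Set.mem_iInter.2 fun i => ?_
      have := Set.mem_iInter.1 hx ⟨i.1, hFG i.2⟩
      have hcomp : ω ⟨i.1, hFG i.2⟩ = ω₀ i := by rw [← hω]
      rwa [hcomp] at this
  have hmeas : ∀ ω₀ : F → ι, (μ (atom T P f F ω₀)).toReal
      = ∑ ω ∈ Finset.univ.filter (fun ω : G → ι => r ω = ω₀),
          (μ (atom T P f G ω)).toReal := by
    intro ω₀
    rw [hdecomp ω₀, measure_biUnion_finset
        (fun ω _ ω' _ hne => atom_disjoint hP.2.1 hne)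
        (fun ω _ => atom_measurableSet hT hP.1 ω),
      ENNReal.toReal_sum (fun ω _ => measure_ne_top μ _)]
  rw [finJoinEnt_eq, finJoinEnt_eq]
  calc ∑ ω₀ : F → ι, Real.negMulLog (μ (atom T P f F ω₀)).toReal
      ≤ ∑ ω₀ : F → ι, ∑ ω ∈ Finset.univ.filter (fun ω : G → ι => r ω = ω₀),
          Real.negMulLog (μ (atom T P f G ω)).toReal := by
        refine Finset.sum_le_sum fun ω₀ _ => ?_
        rw [hmeas ω₀]
        exact negMulLog_sum_le _ _ (fun _ => ENNReal.toReal_nonneg)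
    _ = ∑ ω : G → ι, Real.negMulLog (μ (atom T P f G ω)).toReal :=
        Finset.sum_fiberwise _ _ _

lemma finJoinEnt_reindex (μ : Measure X) (T : X → X) (P : ι → Set X) {f g : ℕ → ℕ}
    {F G : Finset ℕ} (e : G ≃ F) (hval : ∀ i : G, f (e i).1 = g i.1) :
    finJoinEnt μ T P f F = finJoinEnt μ T P g G := by
  rw [finJoinEnt_eq, finJoinEnt_eq]
  refine Fintype.sum_equiv (Equiv.arrowCongr e.symm (Equiv.refl ι)) _ _ fun ω => ?_
  have hset : atom T P f F ω = atom T P g G (fun j => ω (e j)) := by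
    ext x
    simp only [atom, Set.mem_iInter]
    constructor
    · intro h j
      have := h (e j)
      rwa [hval j] at this
    · intro h i
      have := h (e.symm i)
      rw [← hval (e.symm i), e.apply_symm_apply] at this
      exact this
  have harr : (Equiv.arrowCongr e.symm (Equiv.refl ι)) ω = fun j => ω (e j) := by
    funext j; simp [Equiv.arrowCongr]
  rw [harr, ← hset]

lemma finJoinEnt_translate (hT : MeasurePreserving T μ μ)
    (hP : ∀ i, MeasurableSet (P i)) (f : ℕ → ℕ) (F : Finset ℕ) (v : ℕ) :
    finJoinEnt μ T P (fun i => v + f i) F = finJoinEnt μ T P f F := by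
  rw [finJoinEnt_eq, finJoinEnt_eq]
  refine Finset.sum_congr rfl fun ω _ => ?_
  congr 1
  have key : ∀ (a : ℕ) (A : Set X), T^[v + a] ⁻¹' A = T^[v] ⁻¹' (T^[a] ⁻¹' A) := by
    intro a A
    rw [Nat.add_comm, Function.iterate_add, Set.preimage_comp]
  have hset : atom T P (fun i => v + f i) F ω = T^[v] ⁻¹' (atom T P f F ω) := by
    unfold atom
    rw [Set.preimage_iInter]
    exact Set.iInter_congr fun i => key _ _
  rw [hset, (hT.iterate v).measure_preimage
    (atom_measurableSet hT.measurable hP ω).nullMeasurableSet]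

end Measures

section Assembly
variable {X : Type*} [MeasurableSpace X] {μ : MeasureTheory.Measure X} {T : X → X}
  {ι : Type*} [Fintype ι] {P : ι → Set X}

lemma seqJoinEnt_nonneg [IsProbabilityMeasure μ] (s : ℕ → ℕ) (n : ℕ) :
    0 ≤ seqJoinEnt μ T P s n := finJoinEnt_nonneg

lemma seqJoinEnt_div_nonneg [IsProbabilityMeasure μ] (s : ℕ → ℕ) (n : ℕ) :
    0 ≤ seqJoinEnt μ T P s n / n :=
  div_nonneg (seqJoinEnt_nonneg s n) (Nat.cast_nonneg n)

lemma seqJoinEnt_div_limsup_nonneg [IsProbabilityMeasure μ] (s : ℕ → ℕ) :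
    0 ≤ Filter.atTop.limsup fun n : ℕ => seqJoinEnt μ T P s n / n :=
  limsup_nonneg_of_nonneg (seqJoinEnt_div_nonneg s)

lemma seqJoinEnt_div_bounded [IsProbabilityMeasure μ] (hT : Measurable T)
    (hP : IsPartition P) (s : ℕ → ℕ) :
    Filter.IsBoundedUnder (· ≤ ·) Filter.atTop (fun n : ℕ => seqJoinEnt μ T P s n / n) := by
  classical
  refine Filter.isBoundedUnder_of_eventually_le
    (a := Real.log (Fintype.card ι) + 1) ?_
  filter_upwards [Filter.eventually_ge_atTop 1] with n hn
  have hb : seqJoinEnt μ T P s n ≤ n * Real.log (Fintype.card ι) + 1 := by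
    have h := finJoinEnt_le (μ := μ) (T := T) (P := P) (f := s)
      (F := Finset.range n) hT hP
    have hcard : (Fintype.card (↥(Finset.range n) → ι) : ℝ)
        = ((Fintype.card ι : ℕ) : ℝ) ^ n := by
      rw [Fintype.card_fun, Fintype.card_coe, Finset.card_range]
      push_cast; ring
    rw [seqJoinEnt]
    calc finJoinEnt μ T P s (Finset.range n)
        ≤ Real.log (Fintype.card (↥(Finset.range n) → ι)) + 1 := h
      _ = n * Real.log (Fintype.card ι) + 1 := by
          rw [hcard, Real.log_pow]
  have hn0 : (0 : ℝ) < n := by exact_mod_cast hn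
  calc seqJoinEnt μ T P s n / n ≤ (n * Real.log (Fintype.card ι) + 1) / n := by gcongr
    _ = Real.log (Fintype.card ι) + 1 / n := by
        rw [add_div, mul_div_cancel_left₀ _ (ne_of_gt hn0)]
    _ ≤ Real.log (Fintype.card ι) + 1 := by
        have : 1 / (n : ℝ) ≤ 1 := by
          rw [div_le_one hn0]; exact_mod_cast hn
        linarith

lemma exists_posEnt_upperDim_one [IsProbabilityMeasure μ] (hT : MeasurePreserving T μ μ)
    (hP : IsPartition P) {s : ℕ → ℕ} (hs : IsPosEntSeq μ T P s) :
    ∃ t : ℕ → ℕ, IsPosEntSeq μ T P t ∧ upperDim t = 1 := by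
  classical
  obtain ⟨hps, hlim⟩ := hs
  set u : ℕ → ℝ := fun n => seqJoinEnt μ T P s n / n with hu
  set c : ℝ := Filter.atTop.limsup u / 2 with hc
  have hc0 : 0 < c := by rw [hc]; linarith
  have hfreq : ∃ᶠ n in Filter.atTop, c ≤ u n :=
    frequently_le_of_lt_limsup (fun n => seqJoinEnt_div_nonneg s n) (by rw [hc]; linarith)
  have hch : ∀ m : ℕ, ∃ n, m ≤ n ∧ c ≤ u n := by
    intro m
    obtain ⟨n, hn, h⟩ := Filter.frequently_atTop.1 hfreq m
    exact ⟨n, hn, h⟩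
  set g : ℕ → ℕ := fun m => (hch m).choose with hg
  have hg1 : ∀ m, m ≤ g m := fun m => (hch m).choose_spec.1
  have hg2 : ∀ m, c ≤ u (g m) := fun m => (hch m).choose_spec.2
  set t := spSeq s g with ht
  have hpt : IsPosSeq t := ⟨spSeq_strictMono hps.1 hg1, spSeq_pos hps.1 hg1 hps.2⟩
  have hent : ∃ᶠ N : ℕ in Filter.atTop, c / 2 ≤ seqJoinEnt μ T P t N / N := by
    refine Filter.frequently_atTop.2 fun K => ?_
    obtain ⟨m, v, n, w, hm, hkm, hn, hv, hw, hval, hwle, hlast⟩ := stage_spec hps.1 hg1 K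
    have hmn : m + 1 ≤ n := hn ▸ hg1 (m + 1)
    refine ⟨m + n, by omega, ?_⟩
    have h1 : finJoinEnt μ T P t (Finset.Ico m (m + n))
        = finJoinEnt μ T P (fun j => v + s j) (Finset.range n) := by
      refine finJoinEnt_reindex μ T P (icoEquiv m n) fun i => ?_
      have hi : i.1 < n := Finset.mem_range.1 i.2
      rw [icoEquiv_apply]
      exact hval i.1 hi
    have h2 : finJoinEnt μ T P t (Finset.Ico m (m + n))
        ≤ finJoinEnt μ T P t (Finset.range (m + n)) := by
      refine finJoinEnt_mono hT.measurable hP t fun x hx => ?_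
      have := Finset.mem_Ico.1 hx
      exact Finset.mem_range.2 (by omega)
    have h3 : finJoinEnt μ T P (fun j => v + s j) (Finset.range n)
        = seqJoinEnt μ T P s n := finJoinEnt_translate hT hP.1 s (Finset.range n) v
    have hn0 : (0 : ℝ) < (n : ℝ) := by
      have : 1 ≤ n := by omega
      exact_mod_cast this
    have h4 : c * n ≤ seqJoinEnt μ T P s n := by
      have h := hg2 (m + 1)
      rw [← hn] at h
      rw [hu] at h
      exact (le_div_iff₀ hn0).1 h
    have h5 : c * n ≤ seqJoinEnt μ T P t (m + n) := by
      rw [seqJoinEnt]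
      calc c * n ≤ seqJoinEnt μ T P s n := h4
        _ = finJoinEnt μ T P t (Finset.Ico m (m + n)) := by rw [h1, h3]
        _ ≤ _ := h2
    have hN0 : (0 : ℝ) < ((m + n : ℕ) : ℝ) := by
      have : 1 ≤ m + n := by omega
      exact_mod_cast this
    rw [le_div_iff₀ hN0]
    have hle2 : ((m + n : ℕ) : ℝ) ≤ 2 * n := by
      have : m + n ≤ 2 * n := by omega
      calc ((m + n : ℕ) : ℝ) ≤ ((2 * n : ℕ) : ℝ) := by exact_mod_cast this
        _ = 2 * n := by push_cast; ring
    calc c / 2 * ((m + n : ℕ) : ℝ) ≤ c / 2 * (2 * n) := by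
          apply mul_le_mul_of_nonneg_left hle2; linarith
      _ = c * n := by ring
      _ ≤ _ := h5
  have hposlim : 0 < Filter.atTop.limsup (fun n : ℕ => seqJoinEnt μ T P t n / n) :=
    lt_of_lt_of_le (by linarith) (Filter.le_limsup_of_frequently_le hent
      (seqJoinEnt_div_bounded hT.measurable hP t))
  have hdens : ∀ K : ℕ, ∃ N, K ≤ N ∧ t N ≤ 2 * (N + 1) := by
    intro K
    obtain ⟨m, v, n, w, hm, hkm, hn, hv, hw, hval, hwle, hlast⟩ := stage_spec hps.1 hg1 K
    have hmn : m + 1 ≤ n := hn ▸ hg1 (m + 1)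
    refine ⟨m + n + w - 1, by omega, ?_⟩
    rw [ht, hlast]
    omega
  exact ⟨t, ⟨hpt, hposlim⟩, upperDim_eq_one hpt hdens⟩

lemma part_eq_one [IsProbabilityMeasure μ] (hT : MeasurePreserving T μ μ)
    (hP : IsPartition P) (h : ∃ s : ℕ → ℕ, IsPosEntSeq μ T P s) :
    upperPosDimPart μ T P = 1 := by
  obtain ⟨s, hs⟩ := h
  obtain ⟨t, hts, htd⟩ := exists_posEnt_upperDim_one hT hP hs
  have hub : ∀ d ∈ {d : ℝ | ∃ s : ℕ → ℕ, IsPosEntSeq μ T P s ∧ d = upperDim s}, d ≤ 1 := by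
    rintro d ⟨s', hs', rfl⟩
    exact upperDim_le_one hs'.1
  have hmem : (1 : ℝ) ∈ {d : ℝ | ∃ s : ℕ → ℕ, IsPosEntSeq μ T P s ∧ d = upperDim s} :=
    ⟨t, hts, htd.symm⟩
  exact le_antisymm (Real.sSup_le hub zero_le_one) (le_csSup ⟨1, hub⟩ hmem)

lemma part_eq_zero (μ : MeasureTheory.Measure X) (T : X → X)
    (h : ¬ ∃ s : ℕ → ℕ, IsPosEntSeq μ T P s) :
    upperPosDimPart μ T P = 0 := by
  have : {d : ℝ | ∃ s : ℕ → ℕ, IsPosEntSeq μ T P s ∧ d = upperDim s} = ∅ := by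
    ext d
    simp only [Set.mem_setOf_eq, Set.mem_empty_iff_false, iff_false]
    rintro ⟨s, hs, -⟩
    exact h ⟨s, hs⟩
  rw [upperPosDimPart, this, Real.sSup_empty]

lemma trivialPart_isPartition :
    IsPartition (fun _ : Fin 1 => (Set.univ : Set X)) := by
  refine ⟨fun _ => MeasurableSet.univ, ?_, Set.iUnion_const _⟩
  intro i j hij
  exact absurd (Subsingleton.elim i j) hij

lemma trivialPart_no_posEnt (μ : MeasureTheory.Measure X) [IsProbabilityMeasure μ] (T : X → X) :
    ¬ ∃ s : ℕ → ℕ, IsPosEntSeq μ T (fun _ : Fin 1 => (Set.univ : Set X)) s := by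
  rintro ⟨s, -, hpos⟩
  have hz : ∀ n : ℕ, seqJoinEnt μ T (fun _ : Fin 1 => (Set.univ : Set X)) s n / n = 0 := by
    intro n
    rw [seqJoinEnt, finJoinEnt]
    simp
  rw [show (fun n : ℕ => seqJoinEnt μ T (fun _ : Fin 1 => (Set.univ : Set X)) s n / n)
      = fun _ : ℕ => (0 : ℝ) from funext hz, Filter.limsup_const] at hpos
  exact lt_irrefl 0 hpos

end Assembly

end
end EntDim

namespace EntDim

/-- `D̄^p_μ(T,α)` equals 1 if `α` has a positive entropy sequence, 0
otherwise; consequently `D̄^p_μ(X,T) ∈ {0,1}`, and it is 0 iff the system is null. -/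
theorem upperPosDim_dichotomy {X : Type*} [MeasurableSpace X]
    (μ : Measure X) [IsProbabilityMeasure μ] (T : X → X) (hT : MeasurePreserving T μ μ)
    {k : ℕ} (P : Fin k → Set X) (hP : IsPartition P) :
    ((∃ s : ℕ → ℕ, IsPosEntSeq μ T P s) → upperPosDimPart μ T P = 1) ∧
    ((¬ ∃ s : ℕ → ℕ, IsPosEntSeq μ T P s) → upperPosDimPart μ T P = 0) ∧
    (upperPosDim μ T = 0 ∨ upperPosDim μ T = 1) ∧
    (upperPosDim μ T = 0 ↔ IsNullSystem μ T) := by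
  classical
  set O := {d : ℝ | ∃ (k' : ℕ) (P' : Fin k' → Set X),
    IsPartition P' ∧ d = upperPosDimPart μ T P'} with hO
  have hOdef : upperPosDim μ T = sSup O := rfl
  have h0mem : (0 : ℝ) ∈ O :=
    ⟨1, fun _ => Set.univ, trivialPart_isPartition,
      (part_eq_zero μ T (trivialPart_no_posEnt μ T)).symm⟩
  have hcases : ∀ d ∈ O, d = 0 ∨ d = 1 := by
    rintro d ⟨k', P', hP', rfl⟩
    by_cases h : ∃ s : ℕ → ℕ, IsPosEntSeq μ T P' s
    · exact Or.inr (part_eq_one hT hP' h)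
    · exact Or.inl (part_eq_zero μ T h)
  have hub : ∀ d ∈ O, d ≤ 1 := by
    intro d hd
    rcases hcases d hd with h | h <;> simp [h]
  have hbdd : BddAbove O := ⟨1, hub⟩
  refine ⟨fun h => part_eq_one hT hP h, fun h => part_eq_zero μ T h, ?_, ?_⟩
  all_goals
    by_cases Q : ∃ (k' : ℕ) (P' : Fin k' → Set X) (s : ℕ → ℕ),
      IsPartition P' ∧ IsPosEntSeq μ T P' s
  · -- prop3, Q true
    obtain ⟨k', P', s, hP', hs⟩ := Q
    have h1mem : (1 : ℝ) ∈ O := ⟨k', P', hP', (part_eq_one hT hP' ⟨s, hs⟩).symm⟩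
    exact Or.inr (hOdef ▸ le_antisymm (Real.sSup_le hub zero_le_one) (le_csSup hbdd h1mem))
  · -- prop3, Q false
    have hzero : ∀ d ∈ O, d = 0 := by
      rintro d ⟨k', P', hP', rfl⟩
      refine part_eq_zero μ T ?_
      rintro ⟨s, hs⟩
      exact Q ⟨k', P', s, hP', hs⟩
    exact Or.inl (hOdef ▸ le_antisymm
      (Real.sSup_le (fun d hd => (hzero d hd).le) le_rfl) (le_csSup hbdd h0mem))
  · -- prop4, Q true
    obtain ⟨k', P', s, hP', hs⟩ := Q
    have h1mem : (1 : ℝ) ∈ O := ⟨k', P', hP', (part_eq_one hT hP' ⟨s, hs⟩).symm⟩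
    have hsup1 : upperPosDim μ T = 1 :=
      hOdef ▸ le_antisymm (Real.sSup_le hub zero_le_one) (le_csSup hbdd h1mem)
    constructor
    · intro h0
      rw [hsup1] at h0
      norm_num at h0
    · intro hnull
      exfalso
      have h2 := hs.2
      rw [hnull k' P' hP' s hs.1] at h2
      exact lt_irrefl 0 h2
  · -- prop4, Q false
    have hzero : ∀ d ∈ O, d = 0 := by
      rintro d ⟨k', P', hP', rfl⟩
      refine part_eq_zero μ T ?_
      rintro ⟨s, hs⟩
      exact Q ⟨k', P', s, hP', hs⟩
    have hsup0 : upperPosDim μ T = 0 := hOdef ▸ le_antisymm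
      (Real.sSup_le (fun d hd => (hzero d hd).le) le_rfl) (le_csSup hbdd h0mem)
    have hnull : IsNullSystem μ T := by
      intro k' P' hP' s hps
      have hnp : ¬ 0 < Filter.atTop.limsup (fun n : ℕ => seqJoinEnt μ T P' s n / n) := by
        intro hpos
        exact Q ⟨k', P', s, hP', hps, hpos⟩
      exact le_antisymm (not_lt.1 hnp) (seqJoinEnt_div_limsup_nonneg s)
    exact iff_of_true hsup0 hnull
end EntDim
end
end

section
/- Let (X,𝔅,μ,T) be a measure-preserving system, α a finite measurable partition of X, and 0 < τ < D̲^p_μ(T,α) (the supremum of lower dimensions D̲(S) over positive entropy sequences S of α). Then there exist an increasing sequence F = {f_1 < f_2 < ⋯} of positive integers and a real number d > 0 such that D̄(F) ≥ τ and for all integers 1 ≤ m_1 ≤ m_2, H_μ(⋁_{i=m_1}^{m_2} T^{−f_i}α) ≥ (m_2 + 1 − m_1)·d. In particular F is an entropy generating sequence of α. -/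
open MeasureTheory Filter Set
open scoped ENNReal symmDiff

noncomputable section

namespace EntDimAux
open Real Finset

lemma negMulLog_add_le {x y : ℝ} (hx : 0 ≤ x) (hy : 0 ≤ y) :
    Real.negMulLog (x + y) ≤ Real.negMulLog x + Real.negMulLog y := by
  rcases hx.eq_or_lt with h | hx
  · simp [← h]
  rcases hy.eq_or_lt with h | hy
  · simp [← h]
  have h1 : Real.log x ≤ Real.log (x + y) := Real.log_le_log hx (by linarith)
  have h2 : Real.log y ≤ Real.log (x + y) := Real.log_le_log hy (by linarith)
  simp only [Real.negMulLog, neg_mul]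
  nlinarith

lemma sum_negMulLog_le_log_card {ι : Type*} [Fintype ι] (f : ι → ℝ)
    (h0 : ∀ a, 0 ≤ f a) (h1 : ∑ a, f a = 1) :
    ∑ a, Real.negMulLog (f a) ≤ Real.log (Fintype.card ι) := by
  have hk : 0 < (Fintype.card ι : ℝ) := by
    have : Nonempty ι := by
      by_contra h
      rw [not_nonempty_iff] at h
      simp [Finset.univ_eq_empty] at h1
    exact_mod_cast Fintype.card_pos
  have hjen := Real.concaveOn_negMulLog.le_map_sum
    (t := Finset.univ) (w := fun _ : ι => (Fintype.card ι : ℝ)⁻¹) (p := f)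
    (fun _ _ => by positivity)
    (by simp [Finset.card_univ]; field_simp)
    (fun a _ => h0 a)
  have hsum : ∑ a : ι, (Fintype.card ι : ℝ)⁻¹ • f a = (Fintype.card ι : ℝ)⁻¹ := by
    rw [← Finset.smul_sum, h1]; simp
  rw [hsum] at hjen
  have : ∑ a : ι, (Fintype.card ι : ℝ)⁻¹ • Real.negMulLog (f a)
      = (Fintype.card ι : ℝ)⁻¹ * ∑ a, Real.negMulLog (f a) := by
    rw [← Finset.smul_sum]; simp
  rw [this] at hjen
  have hφ : Real.negMulLog ((Fintype.card ι : ℝ)⁻¹)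
      = (Fintype.card ι : ℝ)⁻¹ * Real.log (Fintype.card ι) := by
    rw [Real.negMulLog, Real.log_inv]; ring
  rw [hφ] at hjen
  have := mul_le_mul_of_nonneg_left hjen (le_of_lt hk)
  rw [← mul_assoc, ← mul_assoc, mul_inv_cancel₀ (ne_of_gt hk), one_mul, one_mul] at this
  exact this

lemma jensen_step {κ ι : Type*} [Fintype ι] (t : Finset κ) (p : κ → ℝ) (r : κ → ι → ℝ)
    (hp : ∀ c ∈ t, 0 ≤ p c) (hr : ∀ c ∈ t, ∀ a, 0 ≤ r c a)
    (hs : ∀ c ∈ t, ∑ a, r c a = p c) :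
    (∑ c ∈ t, ∑ a, Real.negMulLog (r c a)) - ∑ c ∈ t, Real.negMulLog (p c)
      ≤ (∑ a, Real.negMulLog (∑ c ∈ t, r c a)) - Real.negMulLog (∑ c ∈ t, p c) := by
  set φ := Real.negMulLog with hφdef
  set P := ∑ c ∈ t, p c with hP
  have hP0 : 0 ≤ P := Finset.sum_nonneg hp
  rcases hP0.eq_or_lt with hP0' | hPpos
  · -- P = 0 : everything vanishes
    have hpz : ∀ c ∈ t, p c = 0 := by
      intro c hc
      exact le_antisymm (by
        have := Finset.single_le_sum hp hc
        rw [← hP] at this; linarith) (hp c hc)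
    have hrz : ∀ c ∈ t, ∀ a, r c a = 0 := by
      intro c hc a
      have h1 : ∑ a, r c a = 0 := by rw [hs c hc, hpz c hc]
      have := (Finset.sum_eq_zero_iff_of_nonneg (fun a _ => hr c hc a)).1 h1
      exact this a (Finset.mem_univ a)
    have e1 : ∀ c ∈ t, ∑ a, φ (r c a) = 0 := by
      intro c hc; apply Finset.sum_eq_zero; intro a _; rw [hrz c hc a]; simp [hφdef]
    have e2 : ∀ a : ι, (∑ c ∈ t, r c a) = 0 := by
      intro a; apply Finset.sum_eq_zero; intro c hc; exact hrz c hc a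
    have A1 : ∑ c ∈ t, ∑ a, φ (r c a) = 0 := Finset.sum_eq_zero e1
    have A2 : ∑ c ∈ t, φ (p c) = 0 :=
      Finset.sum_eq_zero (fun c hc => by rw [hpz c hc]; simp [hφdef])
    have A3 : ∑ a, φ (∑ c ∈ t, r c a) = 0 :=
      Finset.sum_eq_zero (fun a _ => by rw [e2 a]; simp [hφdef])
    have A4 : φ P = 0 := by rw [← hP0']; simp [hφdef]
    rw [A1, A2, A3, A4]
  · -- main case
    set R : ι → ℝ := fun a => ∑ c ∈ t, r c a with hRdef
    have hRsum : ∑ a, R a = P := by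
      rw [hRdef, hP, Finset.sum_comm]
      exact Finset.sum_congr rfl hs
    have key1 : ∀ c ∈ t, ∑ a, φ (r c a) - φ (p c) = p c * ∑ a, φ (r c a / p c) := by
      intro c hc
      rcases eq_or_ne (p c) 0 with h0 | h0
      · have hrz : ∀ a, r c a = 0 := by
          intro a
          have h1 : ∑ a, r c a = 0 := by rw [hs c hc, h0]
          exact (Finset.sum_eq_zero_iff_of_nonneg (fun a _ => hr c hc a)).1 h1 a
            (Finset.mem_univ a)
        simp [h0, hφdef, fun a => hrz a]
      · have hq : ∑ a, r c a / p c = 1 := by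
          rw [← Finset.sum_div, hs c hc, div_self h0]
        have e : ∀ a : ι, φ (r c a) = (r c a / p c) * φ (p c) + p c * φ (r c a / p c) := by
          intro a
          conv_lhs => rw [show r c a = p c * (r c a / p c) by field_simp]
          rw [hφdef, Real.negMulLog_mul]
        rw [Finset.sum_congr rfl (fun a _ => e a), Finset.sum_add_distrib,
          ← Finset.sum_mul, hq, one_mul, ← Finset.mul_sum]
        ring
    have hPne : P ≠ 0 := ne_of_gt hPpos
    have key2 : ∑ a, φ (R a) - φ P = P * ∑ a, φ (R a / P) := by
      have hq : ∑ a, R a / P = 1 := by rw [← Finset.sum_div, hRsum, div_self hPne]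
      have e : ∀ a : ι, φ (R a) = (R a / P) * φ P + P * φ (R a / P) := by
        intro a
        conv_lhs => rw [show R a = P * (R a / P) by field_simp]
        rw [hφdef, Real.negMulLog_mul]
      rw [Finset.sum_congr rfl (fun a _ => e a), Finset.sum_add_distrib,
        ← Finset.sum_mul, hq, one_mul, ← Finset.mul_sum]
      ring
    have key3 : ∀ a : ι, ∑ c ∈ t, p c * φ (r c a / p c) ≤ P * φ (R a / P) := by
      intro a
      have hjen := Real.concaveOn_negMulLog.le_map_sum
        (t := t) (w := fun c => p c / P) (p := fun c => r c a / p c)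
        (fun c hc => div_nonneg (hp c hc) hP0)
        (by rw [← Finset.sum_div, ← hP, div_self hPne])
        (fun c hc => div_nonneg (hr c hc a) (hp c hc))
      have hpt : ∀ c ∈ t, (p c / P) • (r c a / p c) = r c a / P := by
        intro c hc
        rcases eq_or_ne (p c) 0 with h0 | h0
        · have h1 : ∑ b, r c b = 0 := by rw [hs c hc, h0]
          have hrz := (Finset.sum_eq_zero_iff_of_nonneg (fun b _ => hr c hc b)).1 h1 a
            (Finset.mem_univ a)
          simp [h0, hrz]
        · field_simp
          rw [smul_eq_mul]; field_simp
      rw [Finset.sum_congr rfl hpt, ← Finset.sum_div] at hjen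
      calc ∑ c ∈ t, p c * φ (r c a / p c)
          = P * ∑ c ∈ t, (p c / P) • φ (r c a / p c) := by
            rw [Finset.mul_sum]
            refine Finset.sum_congr rfl (fun c hc => ?_)
            rw [smul_eq_mul]; field_simp
        _ ≤ P * φ (R a / P) := by
            exact mul_le_mul_of_nonneg_left hjen hP0
    calc (∑ c ∈ t, ∑ a, φ (r c a)) - ∑ c ∈ t, φ (p c)
        = ∑ c ∈ t, (∑ a, φ (r c a) - φ (p c)) := by rw [Finset.sum_sub_distrib]
      _ = ∑ c ∈ t, p c * ∑ a, φ (r c a / p c) := Finset.sum_congr rfl key1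
      _ = ∑ a, ∑ c ∈ t, p c * φ (r c a / p c) := by
          rw [Finset.sum_comm]
          exact Finset.sum_congr rfl (fun c _ => Finset.mul_sum _ _ _)
      _ ≤ ∑ a, P * φ (R a / P) := Finset.sum_le_sum (fun a _ => key3 a)
      _ = P * ∑ a, φ (R a / P) := (Finset.mul_sum _ _ _).symm
      _ = ∑ a, φ (R a) - φ P := key2.symm

end EntDimAux


namespace EntDimAux
open EntDim Finset

attribute [local instance] Classical.propDecidable

variable {X : Type*} [MeasurableSpace X] {ι : Type*} [Fintype ι]

/-- The atom of the join of the partitions `R i`, `i ∈ F`, determined by `ω`. -/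
def atomF (R : ℕ → ι → Set X) (F : Finset ℕ) (ω : F → ι) : Set X :=
  ⋂ i : F, R i.1 (ω i)

/-- Entropy of the join of the partitions `R i`, `i ∈ F`. -/
def EJ (μ : Measure X) (R : ℕ → ι → Set X) (F : Finset ℕ) : ℝ :=
  ∑ ω : F → ι, Real.negMulLog (μ (atomF R F ω)).toReal

lemma finJoinEnt_eq_EJ (μ : Measure X) (T : X → X) (P : ι → Set X) (f : ℕ → ℕ)
    (F : Finset ℕ) : finJoinEnt μ T P f F = EJ μ (fun j a => T^[f j] ⁻¹' P a) F := rfl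

lemma IsPartition.preimage {P : ι → Set X} (hP : IsPartition P) {g : X → X}
    (hg : Measurable g) : IsPartition (fun a => g ⁻¹' P a) := by
  refine ⟨fun a => hg (hP.1 a), fun i j hij => (hP.2.1 hij).preimage g, ?_⟩
  rw [← Set.preimage_iUnion, hP.2.2, Set.preimage_univ]

lemma measurable_atomF {R : ℕ → ι → Set X} (hR : ∀ j, IsPartition (R j))
    {F : Finset ℕ} (ω : F → ι) : MeasurableSet (atomF R F ω) :=
  MeasurableSet.iInter fun i => (hR i.1).1 (ω i)

lemma disjoint_atomF {R : ℕ → ι → Set X} (hR : ∀ j, IsPartition (R j))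
    {F : Finset ℕ} : Pairwise (Function.onFun Disjoint (atomF R F)) := by
  intro ω ω' hne
  obtain ⟨i, hi⟩ : ∃ i, ω i ≠ ω' i := Function.ne_iff.1 hne
  exact ((hR i.1).2.1 hi).mono (Set.iInter_subset _ i) (Set.iInter_subset _ i)

lemma sum_meas_inter (μ : Measure X) {Q : ι → Set X} (hQ : IsPartition Q)
    {A : Set X} (hA : MeasurableSet A) : ∑ a, μ (A ∩ Q a) = μ A :=
  calc ∑ a, μ (A ∩ Q a) = ∑' a, μ (A ∩ Q a) := (tsum_fintype _).symm
    _ = μ (⋃ a, A ∩ Q a) := (measure_iUnion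
        (fun i j h => ((hQ.2.1 h).mono Set.inter_subset_right Set.inter_subset_right))
        (fun a => hA.inter (hQ.1 a))).symm
    _ = μ A := by rw [← Set.inter_iUnion, hQ.2.2, Set.inter_univ]

/-- Restriction of an atom-index along `C ⊆ C'`. -/
def resMap {C C' : Finset ℕ} (h : C ⊆ C') (ω : C' → ι) : C → ι :=
  fun i => ω ⟨i.1, h i.2⟩

lemma atomF_eq_biUnion {R : ℕ → ι → Set X} (hR : ∀ j, IsPartition (R j))
    {C C' : Finset ℕ} (h : C ⊆ C') (ρ : C → ι) :
    atomF R C ρ =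
      ⋃ ω ∈ Finset.univ.filter (fun ω : C' → ι => resMap h ω = ρ), atomF R C' ω := by
  apply Set.Subset.antisymm
  · intro x hx
    classical
    have hch : ∀ j : ℕ, ∃ a : ι, x ∈ R j a := by
      intro j
      have : x ∈ ⋃ a, R j a := by rw [(hR j).2.2]; exact Set.mem_univ x
      exact Set.mem_iUnion.1 this
    set ω : {x // x ∈ C'} → ι := fun i =>
      if hm : i.1 ∈ C then ρ ⟨i.1, hm⟩ else Classical.choose (hch i.1) with hω
    have hres : resMap h ω = ρ := by
      funext i
      have : (⟨i.1, h i.2⟩ : C').1 ∈ C := i.2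
      simp only [resMap, hω, dif_pos this]
    have hmem : x ∈ atomF R C' ω := by
      rw [atomF, Set.mem_iInter]
      intro i
      by_cases hm : i.1 ∈ C
      · have h1 : ω i = ρ ⟨i.1, hm⟩ := dif_pos hm
        rw [h1]
        exact (Set.mem_iInter.1 hx) ⟨i.1, hm⟩
      · have h1 : ω i = Classical.choose (hch i.1) := dif_neg hm
        rw [h1]
        exact Classical.choose_spec (hch i.1)
    exact Set.mem_iUnion₂.2 ⟨ω, by simpa using hres, hmem⟩
  · refine Set.iUnion₂_subset fun ω hω => ?_
    have hres : resMap h ω = ρ := by simpa using hω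
    intro x hx
    rw [atomF, Set.mem_iInter]
    intro i
    have := (Set.mem_iInter.1 hx) ⟨i.1, h i.2⟩
    rw [← hres]
    exact this

lemma meas_atomF_split (μ : Measure X) {R : ℕ → ι → Set X} (hR : ∀ j, IsPartition (R j))
    {C C' : Finset ℕ} (h : C ⊆ C') (ρ : C → ι) {S : Set X} (hS : MeasurableSet S) :
    μ (atomF R C ρ ∩ S) =
      ∑ ω ∈ Finset.univ.filter (fun ω : C' → ι => resMap h ω = ρ),
        μ (atomF R C' ω ∩ S) := by
  rw [atomF_eq_biUnion hR h ρ, Set.iUnion₂_inter]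
  exact measure_biUnion_finset
    (fun ω _ ω' _ hne => ((disjoint_atomF hR hne).mono
      Set.inter_subset_left Set.inter_subset_left))
    (fun ω _ => (measurable_atomF hR ω).inter hS)

end EntDimAux

namespace EntDimAux
open EntDim Finset

attribute [local instance] Classical.propDecidable

variable {X : Type*} [MeasurableSpace X] {ι : Type*} [Fintype ι]

/-- Splitting off one partition from a join. -/
def insEquiv {j : ℕ} {F : Finset ℕ} (hj : j ∉ F) :
    (({x // x ∈ F} → ι) × ι) ≃ ({x // x ∈ insert j F} → ι) where
  toFun := fun ρa i => if hm : i.1 ∈ F then ρa.1 ⟨i.1, hm⟩ else ρa.2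
  invFun := fun ω => (fun i => ω ⟨i.1, Finset.mem_insert_of_mem i.2⟩,
    ω ⟨j, Finset.mem_insert_self j F⟩)
  left_inv := by
    rintro ⟨ρ, a⟩
    refine Prod.ext ?_ ?_
    · funext i
      exact dif_pos i.2
    · exact dif_neg hj
  right_inv := by
    intro ω
    funext i
    by_cases hm : i.1 ∈ F
    · exact dif_pos hm
    · have hij : i.1 = j := by
        rcases Finset.mem_insert.1 i.2 with h | h
        · exact h
        · exact absurd h hm
      have he : i = ⟨j, Finset.mem_insert_self j F⟩ := Subtype.ext hij
      rw [he]
      exact dif_neg hj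

lemma atomF_insert {R : ℕ → ι → Set X} {j : ℕ} {F : Finset ℕ} (hj : j ∉ F)
    (ρ : F → ι) (a : ι) :
    atomF R (insert j F) (insEquiv hj (ρ, a)) = atomF R F ρ ∩ R j a := by
  ext x
  simp only [atomF, Set.mem_iInter, Set.mem_inter_iff]
  have hval_mem : ∀ (i : {x // x ∈ F}),
      (insEquiv hj (ρ, a)) ⟨i.1, Finset.mem_insert_of_mem i.2⟩ = ρ i := by
    intro i
    have h1 : (insEquiv hj (ρ, a)) ⟨i.1, Finset.mem_insert_of_mem i.2⟩ = ρ ⟨i.1, i.2⟩ :=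
      dif_pos i.2
    rw [h1]
  have hval_j : (insEquiv hj (ρ, a)) ⟨j, Finset.mem_insert_self j F⟩ = a := dif_neg hj
  constructor
  · intro hx
    refine ⟨fun i => ?_, ?_⟩
    · have := hx ⟨i.1, Finset.mem_insert_of_mem i.2⟩
      rwa [hval_mem i] at this
    · have := hx ⟨j, Finset.mem_insert_self j F⟩
      rwa [hval_j] at this
  · rintro ⟨h1, h2⟩ i
    by_cases hm : i.1 ∈ F
    · have he : i = ⟨i.1, Finset.mem_insert_of_mem hm⟩ := Subtype.ext rfl
      rw [he, hval_mem ⟨i.1, hm⟩]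
      exact h1 ⟨i.1, hm⟩
    · have hij : i.1 = j := by
        rcases Finset.mem_insert.1 i.2 with h | h
        · exact h
        · exact absurd h hm
      have he : i = ⟨j, Finset.mem_insert_self j F⟩ := Subtype.ext hij
      rw [he, hval_j]
      exact h2

lemma EJ_insert (μ : Measure X) (R : ℕ → ι → Set X) {j : ℕ} {F : Finset ℕ} (hj : j ∉ F) :
    EJ μ R (insert j F) =
      ∑ ρ : F → ι, ∑ a : ι, Real.negMulLog (μ (atomF R F ρ ∩ R j a)).toReal := by
  rw [EJ, ← Equiv.sum_comp (insEquiv hj)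
    (fun ω => Real.negMulLog (μ (atomF R (insert j F) ω)).toReal), Fintype.sum_prod_type]
  exact Finset.sum_congr rfl fun ρ _ => Finset.sum_congr rfl fun a _ => by
    rw [atomF_insert hj]

/-- Monotonicity of conditional entropy: conditioning on a finer join decreases
the entropy increment (submodularity). -/
lemma EJ_insert_sub_le (μ : Measure X) [IsProbabilityMeasure μ]
    {R : ℕ → ι → Set X} (hR : ∀ j, IsPartition (R j))
    {C C' : Finset ℕ} (hCC : C ⊆ C') {j : ℕ} (hj : j ∉ C') :
    EJ μ R (insert j C') - EJ μ R C' ≤ EJ μ R (insert j C) - EJ μ R C := by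
  have hjC : j ∉ C := fun h => hj (hCC h)
  rw [EJ_insert μ R hj, EJ_insert μ R hjC]
  -- group the `C'`-sums along fibers of the restriction map
  have hgrp1 : ∀ g : ({x // x ∈ C'} → ι) → ℝ,
      ∑ ω : {x // x ∈ C'} → ι, g ω =
        ∑ ρ : {x // x ∈ C} → ι,
          ∑ ω ∈ Finset.univ.filter (fun ω : {x // x ∈ C'} → ι => resMap hCC ω = ρ), g ω :=
    fun g => (Finset.sum_fiberwise Finset.univ (resMap hCC) g).symm
  have hEJ' : EJ μ R C' = ∑ ρ : {x // x ∈ C} → ι,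
      ∑ ω ∈ Finset.univ.filter (fun ω : {x // x ∈ C'} → ι => resMap hCC ω = ρ),
        Real.negMulLog (μ (atomF R C' ω)).toReal := hgrp1 _
  have hins' : (∑ ω : {x // x ∈ C'} → ι, ∑ a : ι,
        Real.negMulLog (μ (atomF R C' ω ∩ R j a)).toReal) =
      ∑ ρ : {x // x ∈ C} → ι,
        ∑ ω ∈ Finset.univ.filter (fun ω : {x // x ∈ C'} → ι => resMap hCC ω = ρ),
          ∑ a : ι, Real.negMulLog (μ (atomF R C' ω ∩ R j a)).toReal := hgrp1 _
  have hEJC : EJ μ R C = ∑ ρ : {x // x ∈ C} → ι,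
      Real.negMulLog (μ (atomF R C ρ)).toReal := rfl
  rw [hEJ', hins', hEJC, ← Finset.sum_sub_distrib, ← Finset.sum_sub_distrib]
  apply Finset.sum_le_sum
  intro ρ _
  -- apply the Jensen step on each fiber
  have hkey := jensen_step
    (t := Finset.univ.filter (fun ω : {x // x ∈ C'} → ι => resMap hCC ω = ρ))
    (p := fun ω => (μ (atomF R C' ω)).toReal)
    (r := fun ω a => (μ (atomF R C' ω ∩ R j a)).toReal)
    (fun ω _ => ENNReal.toReal_nonneg)
    (fun ω _ a => ENNReal.toReal_nonneg)
    (fun ω _ => by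
      rw [← ENNReal.toReal_sum (fun a _ => measure_ne_top μ _)]
      congr 1
      exact sum_meas_inter μ (hR j) (measurable_atomF hR ω))
  have hp_tot : ∑ ω ∈ Finset.univ.filter
        (fun ω : {x // x ∈ C'} → ι => resMap hCC ω = ρ),
      (μ (atomF R C' ω)).toReal = (μ (atomF R C ρ)).toReal := by
    rw [← ENNReal.toReal_sum (fun ω _ => measure_ne_top μ _)]
    congr 1
    have := meas_atomF_split μ hR hCC ρ (S := Set.univ) MeasurableSet.univ
    simpa [Set.inter_univ] using this.symm
  have hr_tot : ∀ a : ι, ∑ ω ∈ Finset.univ.filter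
        (fun ω : {x // x ∈ C'} → ι => resMap hCC ω = ρ),
      (μ (atomF R C' ω ∩ R j a)).toReal = (μ (atomF R C ρ ∩ R j a)).toReal := by
    intro a
    rw [← ENNReal.toReal_sum (fun ω _ => measure_ne_top μ _)]
    congr 1
    exact (meas_atomF_split μ hR hCC ρ ((hR j).1 a)).symm
  simp only [hp_tot, hr_tot] at hkey
  exact hkey

end EntDimAux

namespace EntDimAux
open EntDim Finset

attribute [local instance] Classical.propDecidable

variable {X : Type*} [MeasurableSpace X] {ι : Type*} [Fintype ι]

lemma EJ_empty (μ : Measure X) [IsProbabilityMeasure μ] (R : ℕ → ι → Set X) :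
    EJ μ R ∅ = 0 := by
  rw [EJ]
  apply Finset.sum_eq_zero
  intro ω _
  have h : atomF R ∅ ω = Set.univ := by
    rw [atomF]
    exact Set.iInter_of_empty _
  rw [h, measure_univ]
  simp

lemma EJ_nonneg (μ : Measure X) [IsProbabilityMeasure μ] (R : ℕ → ι → Set X)
    (F : Finset ℕ) : 0 ≤ EJ μ R F := by
  apply Finset.sum_nonneg
  intro ω _
  apply Real.negMulLog_nonneg ENNReal.toReal_nonneg
  have h1 : μ (atomF R F ω) ≤ 1 := prob_le_one
  calc (μ (atomF R F ω)).toReal ≤ (1 : ℝ≥0∞).toReal := ENNReal.toReal_mono ENNReal.one_ne_top h1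
    _ = 1 := by simp

lemma EJ_singleton_le (μ : Measure X) [IsProbabilityMeasure μ]
    {R : ℕ → ι → Set X} (hR : ∀ j, IsPartition (R j)) (j : ℕ) :
    EJ μ R {j} ≤ Real.log (Fintype.card ι) := by
  have h0 : ({j} : Finset ℕ) = insert j ∅ := rfl
  rw [h0, EJ_insert μ R (Finset.notMem_empty j)]
  have huniv : ∀ ρ : ({x // x ∈ (∅ : Finset ℕ)} → ι), atomF R ∅ ρ = Set.univ := by
    intro ρ
    rw [atomF]
    exact Set.iInter_of_empty _
  have hval : ∀ ρ : ({x // x ∈ (∅ : Finset ℕ)} → ι), ∀ a : ι,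
      (μ (atomF R ∅ ρ ∩ R j a)).toReal = (μ (R j a)).toReal := by
    intro ρ a
    rw [huniv ρ, Set.univ_inter]
  calc ∑ ρ : ({x // x ∈ (∅ : Finset ℕ)} → ι), ∑ a : ι,
        Real.negMulLog (μ (atomF R ∅ ρ ∩ R j a)).toReal
      = ∑ ρ : ({x // x ∈ (∅ : Finset ℕ)} → ι), ∑ a : ι,
        Real.negMulLog (μ (R j a)).toReal := by
        refine Finset.sum_congr rfl fun ρ _ => Finset.sum_congr rfl fun a _ => ?_
        rw [hval ρ a]
    _ = ∑ a : ι, Real.negMulLog (μ (R j a)).toReal := by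
        rw [Fintype.sum_unique]
    _ ≤ Real.log (Fintype.card ι) := by
        apply sum_negMulLog_le_log_card
        · intro a; exact ENNReal.toReal_nonneg
        · rw [← ENNReal.toReal_sum (fun a _ => measure_ne_top μ _)]
          have : ∑ a : ι, μ (R j a) = 1 := by
            have := sum_meas_inter μ (hR j) (MeasurableSet.univ (α := X))
            simpa [Set.univ_inter] using this
          rw [this]
          simp

/-- Chain-rule lower bound: the entropy of a join dominates the sum of the
conditional-entropy increments relative to larger histories. -/
lemma EJ_key (μ : Measure X) [IsProbabilityMeasure μ]
    {R : ℕ → ι → Set X} (hR : ∀ j, IsPartition (R j))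
    (A : Finset ℕ) (H : ℕ → Finset ℕ)
    (hH1 : ∀ j ∈ A, ∀ i ∈ A, i < j → i ∈ H j) (hH2 : ∀ j ∈ A, j ∉ H j) :
    ∑ j ∈ A, (EJ μ R (insert j (H j)) - EJ μ R (H j)) ≤ EJ μ R A := by
  induction A using Finset.strongInduction with
  | _ A ih =>
    rcases Finset.eq_empty_or_nonempty A with hA | hA
    · rw [hA]
      simp [EJ_empty μ R]
    · set j := A.max' hA with hjdef
      have hjA : j ∈ A := A.max'_mem hA
      set A' := A.erase j with hA'def
      have hsub : A' ⊆ H j := by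
        intro i hi
        have hiA : i ∈ A := Finset.mem_of_mem_erase hi
        have hine : i ≠ j := Finset.ne_of_mem_erase hi
        have hile : i ≤ j := A.le_max' i hiA
        exact hH1 j hjA i hiA (lt_of_le_of_ne hile hine)
      have hjA' : j ∉ A' := Finset.notMem_erase j A
      have hstep : EJ μ R (insert j (H j)) - EJ μ R (H j)
          ≤ EJ μ R (insert j A') - EJ μ R A' :=
        EJ_insert_sub_le μ hR hsub (hH2 j hjA)
      have hih : ∑ i ∈ A', (EJ μ R (insert i (H i)) - EJ μ R (H i)) ≤ EJ μ R A' :=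
        ih A' (Finset.erase_ssubset hjA)
          (fun j' hj' i hi hlt => hH1 j' (Finset.mem_of_mem_erase hj') i
            (Finset.mem_of_mem_erase hi) hlt)
          (fun j' hj' => hH2 j' (Finset.mem_of_mem_erase hj'))
      have hsum : ∑ i ∈ A, (EJ μ R (insert i (H i)) - EJ μ R (H i))
          = (EJ μ R (insert j (H j)) - EJ μ R (H j))
            + ∑ i ∈ A', (EJ μ R (insert i (H i)) - EJ μ R (H i)) :=
        (Finset.add_sum_erase A _ hjA).symm
      have hAeq : EJ μ R A = EJ μ R (insert j A') := by rw [Finset.insert_erase hjA]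
      rw [hsum, hAeq]
      linarith

/-- Reindexing the join along an injective map. -/
lemma EJ_image (μ : Measure X) {R : ℕ → ι → Set X} {e : ℕ → ℕ}
    (he : Function.Injective e) (A : Finset ℕ) :
    EJ μ (fun j => R (e j)) A = EJ μ R (A.image e) := by
  set Φ : ({x // x ∈ A.image e} → ι) → ({x // x ∈ A} → ι) :=
    fun ω' i => ω' ⟨e i.1, Finset.mem_image_of_mem e i.2⟩ with hΦdef
  have hinj : Function.Injective Φ := by
    intro ω1 ω2 h
    funext jj
    obtain ⟨i, hiA, hei⟩ := Finset.mem_image.1 jj.2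
    have h1 := congrFun h ⟨i, hiA⟩
    simp only [hΦdef] at h1
    have he1 : (⟨e i, Finset.mem_image_of_mem e hiA⟩ : {x // x ∈ A.image e}) = jj :=
      Subtype.ext hei
    rwa [he1] at h1
  have hcard : Fintype.card ({x // x ∈ A.image e} → ι)
      = Fintype.card ({x // x ∈ A} → ι) := by
    rw [Fintype.card_fun, Fintype.card_fun, Fintype.card_coe, Fintype.card_coe,
      Finset.card_image_of_injective A he]
  have hbij : Function.Bijective Φ :=
    (Fintype.bijective_iff_injective_and_card Φ).2 ⟨hinj, hcard⟩
  have hatom : ∀ ω' : {x // x ∈ A.image e} → ι,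
      atomF (fun j => R (e j)) A (Φ ω') = atomF R (A.image e) ω' := by
    intro ω'
    ext x
    simp only [atomF, Set.mem_iInter]
    constructor
    · intro hx jj
      obtain ⟨i, hiA, hei⟩ := Finset.mem_image.1 jj.2
      have h1 := hx ⟨i, hiA⟩
      have he1 : (⟨e i, Finset.mem_image_of_mem e hiA⟩ : {x // x ∈ A.image e}) = jj :=
        Subtype.ext hei
      simp only [hΦdef] at h1
      rwa [he1, hei] at h1

    · intro hx i
      exact hx ⟨e i.1, Finset.mem_image_of_mem e i.2⟩
  refine (Fintype.sum_bijective Φ hbij _ _ fun ω' => ?_).symm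
  rw [hatom ω']

end EntDimAux

namespace EntDimAux
open EntDim Finset

attribute [local instance] Classical.propDecidable

variable {X : Type*} [MeasurableSpace X] {ι : Type*} [Fintype ι]

lemma EJ_card_le (μ : Measure X) [IsProbabilityMeasure μ]
    {R : ℕ → ι → Set X} (hR : ∀ j, IsPartition (R j)) (F : Finset ℕ) :
    EJ μ R F ≤ F.card * Real.log (Fintype.card ι) := by
  induction F using Finset.induction with
  | empty => rw [EJ_empty μ R]; simp
  | @insert j F hj ih =>
    have h1 : EJ μ R (insert j F) - EJ μ R F ≤ EJ μ R (insert j ∅) - EJ μ R ∅ :=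
      EJ_insert_sub_le μ hR (Finset.empty_subset F) hj
    have h2 : EJ μ R (insert j (∅ : Finset ℕ)) = EJ μ R {j} := rfl
    have h3 := EJ_singleton_le μ hR j
    have h4 := EJ_empty μ R
    rw [Finset.card_insert_of_notMem hj]
    push_cast
    rw [h2, h4] at h1
    linarith

/-- The conditional entropy increment of the `j`-th partition given all previous ones. -/
def bInc (μ : Measure X) (R : ℕ → ι → Set X) (j : ℕ) : ℝ :=
  EJ μ R (Finset.range (j + 1)) - EJ μ R (Finset.range j)

lemma sum_bInc (μ : Measure X) [IsProbabilityMeasure μ] (R : ℕ → ι → Set X) (n : ℕ) :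
    ∑ j ∈ Finset.range n, bInc μ R j = EJ μ R (Finset.range n) := by
  induction n with
  | zero => simp [EJ_empty μ R]
  | succ n ih => rw [Finset.sum_range_succ, ih, bInc]; ring

lemma bInc_le (μ : Measure X) [IsProbabilityMeasure μ]
    {R : ℕ → ι → Set X} (hR : ∀ j, IsPartition (R j)) (j : ℕ) :
    bInc μ R j ≤ Real.log (Fintype.card ι) := by
  have h0 : Finset.range (j + 1) = insert j (Finset.range j) := Finset.range_add_one
  have h1 : EJ μ R (insert j (Finset.range j)) - EJ μ R (Finset.range j)
      ≤ EJ μ R (insert j ∅) - EJ μ R ∅ :=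
    EJ_insert_sub_le μ hR (Finset.empty_subset _) Finset.notMem_range_self
  have h2 : EJ μ R (insert j (∅ : Finset ℕ)) = EJ μ R {j} := rfl
  have h3 := EJ_singleton_le μ hR j
  have h4 := EJ_empty μ R
  rw [h2, h4] at h1
  rw [bInc, h0]
  linarith

/-- Block lower bound: along a subsequence `e` on which every increment is at least
`c`, every block join has entropy at least `c` times the block length. -/
lemma EJ_block_ge (μ : Measure X) [IsProbabilityMeasure μ]
    {R : ℕ → ι → Set X} (hR : ∀ j, IsPartition (R j))
    {e : ℕ → ℕ} (he : StrictMono e) {c : ℝ} (hc : ∀ i, c ≤ bInc μ R (e i))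
    (A : Finset ℕ) :
    (A.card : ℝ) * c ≤ EJ μ (fun j => R (e j)) A := by
  rw [EJ_image μ he.injective A]
  have hkey := EJ_key μ hR (A.image e) Finset.range
    (fun j _ i _ hlt => Finset.mem_range.2 hlt)
    (fun j _ => Finset.notMem_range_self)
  have hsum : ∑ j ∈ A.image e,
      (EJ μ R (insert j (Finset.range j)) - EJ μ R (Finset.range j))
      = ∑ i ∈ A, bInc μ R (e i) := by
    rw [Finset.sum_image (fun i _ i' _ h => he.injective h)]
    refine Finset.sum_congr rfl fun i _ => ?_
    rw [bInc, Finset.range_add_one]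
  calc (A.card : ℝ) * c = ∑ _i ∈ A, c := by rw [Finset.sum_const]; ring
    _ ≤ ∑ i ∈ A, bInc μ R (e i) := Finset.sum_le_sum fun i _ => hc i
    _ = _ := hsum.symm
    _ ≤ EJ μ R (A.image e) := hkey

/-- Counting: if the total entropy up to `n` is at least `2cn`, at least `cn/L`
increments among the first `n` are at least `c`. -/
lemma count_large_bInc (μ : Measure X) [IsProbabilityMeasure μ]
    {R : ℕ → ι → Set X} (hR : ∀ j, IsPartition (R j)) {c : ℝ} (hc : 0 < c) {n : ℕ}
    (hn : 2 * c * n ≤ EJ μ R (Finset.range n)) :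
    c * n ≤ Real.log (Fintype.card ι) * (Nat.count (fun j => c ≤ bInc μ R j) n) := by
  classical
  set p : ℕ → Prop := fun j => c ≤ bInc μ R j with hp
  set L := Real.log (Fintype.card ι) with hL
  have hsplit := Finset.sum_filter_add_sum_filter_not (Finset.range n) p (bInc μ R)
  have h1 : ∑ j ∈ (Finset.range n).filter p, bInc μ R j
      ≤ ((Finset.range n).filter p).card * L := by
    have := Finset.sum_le_card_nsmul ((Finset.range n).filter p) (bInc μ R) L
      (fun j _ => bInc_le μ hR j)
    simpa [nsmul_eq_mul] using this
  have h2 : ∑ j ∈ (Finset.range n).filter (fun j => ¬ p j), bInc μ R j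
      ≤ n * c := by
    calc ∑ j ∈ (Finset.range n).filter (fun j => ¬ p j), bInc μ R j
        ≤ ((Finset.range n).filter (fun j => ¬ p j)).card * c := by
          have := Finset.sum_le_card_nsmul ((Finset.range n).filter (fun j => ¬ p j))
            (bInc μ R) c (fun j hj => le_of_not_ge (Finset.mem_filter.1 hj).2)
          simpa [nsmul_eq_mul] using this
      _ ≤ n * c := by
          have hcard : ((Finset.range n).filter (fun j => ¬ p j)).card ≤ n := by
            calc ((Finset.range n).filter (fun j => ¬ p j)).card
                ≤ (Finset.range n).card := Finset.card_filter_le _ _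
              _ = n := Finset.card_range n
          exact mul_le_mul_of_nonneg_right (by exact_mod_cast hcard) hc.le
  have htele := sum_bInc μ R n
  have hcount : (Nat.count p n : ℝ) = ((Finset.range n).filter p).card := by
    rw [Nat.count_eq_card_filter_range]
  rw [hcount]
  nlinarith [hsplit, h1, h2, htele, hn]

end EntDimAux

namespace EntDimAux
open EntDim Filter

lemma isPosSeq_succ_le {s : ℕ → ℕ} (h : IsPosSeq s) : ∀ m, m + 1 ≤ s m := by
  intro m
  induction m with
  | zero => exact h.2
  | succ m ih =>
    have h2 := h.1 (Nat.lt_succ_self m)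
    simp only [Nat.succ_eq_add_one] at h2 ⊢
    omega

lemma log_card_nonneg (k : ℕ) : 0 ≤ Real.log k := by
  rcases Nat.eq_zero_or_pos k with rfl | hk
  · simp
  · exact Real.log_nonneg (by exact_mod_cast hk)

lemma dimExprSup_two_eq_zero {f : ℕ → ℕ} (hf : ∀ n, n + 1 ≤ f n) :
    dimExprSup f 2 = 0 := by
  have htend : Tendsto (fun n : ℕ => ((n : ℝ≥0∞) + 1) / (f n : ℝ≥0∞) ^ (2:ℝ))
      atTop (nhds 0) := by
    have hb : ∀ n : ℕ, ((n : ℝ≥0∞) + 1) / (f n : ℝ≥0∞) ^ (2:ℝ)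
        ≤ ((n : ℝ≥0∞) + 1)⁻¹ := by
      intro n
      have h1 : ((n : ℝ≥0∞) + 1) ≤ (f n : ℝ≥0∞) := by
        have := hf n
        have hc : ((n + 1 : ℕ) : ℝ≥0∞) ≤ ((f n : ℕ) : ℝ≥0∞) := by exact_mod_cast this
        push_cast at hc
        exact hc
      have h2 : ((n : ℝ≥0∞) + 1) ^ (2:ℝ) ≤ (f n : ℝ≥0∞) ^ (2:ℝ) :=
        ENNReal.rpow_le_rpow h1 (by norm_num)
      have h3 : ((n : ℝ≥0∞) + 1) / (f n : ℝ≥0∞) ^ (2:ℝ)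
          ≤ ((n : ℝ≥0∞) + 1) / ((n : ℝ≥0∞) + 1) ^ (2:ℝ) :=
        ENNReal.div_le_div le_rfl h2
      have hne0 : ((n : ℝ≥0∞) + 1) ≠ 0 := by simp
      have hnetop : ((n : ℝ≥0∞) + 1) ≠ ⊤ := by
        simp [ENNReal.add_ne_top]
      have h4 : ((n : ℝ≥0∞) + 1) ^ (2:ℝ) = ((n : ℝ≥0∞) + 1) * ((n : ℝ≥0∞) + 1) := by
        rw [show (2:ℝ) = ((2:ℕ):ℝ) by norm_num, ENNReal.rpow_natCast, sq]
      have h5 : ((n : ℝ≥0∞) + 1) / (((n : ℝ≥0∞) + 1) * ((n : ℝ≥0∞) + 1))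
          = ((n : ℝ≥0∞) + 1)⁻¹ := by
        rw [show ((n : ℝ≥0∞) + 1) = ((n : ℝ≥0∞) + 1) * 1 by rw [mul_one]]
        rw [show (((n : ℝ≥0∞) + 1) * 1 * (((n : ℝ≥0∞) + 1) * 1)) =
          (((n : ℝ≥0∞) + 1) * (((n : ℝ≥0∞) + 1) * 1)) by ring]
        rw [ENNReal.mul_div_mul_left _ _ (by simpa using hne0) (by simpa using hnetop)]
        rw [ENNReal.div_eq_inv_mul, mul_one]
      calc ((n : ℝ≥0∞) + 1) / (f n : ℝ≥0∞) ^ (2:ℝ)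
          ≤ ((n : ℝ≥0∞) + 1) / ((n : ℝ≥0∞) + 1) ^ (2:ℝ) := h3
        _ = ((n : ℝ≥0∞) + 1)⁻¹ := by rw [h4, h5]
    have hinv : Tendsto (fun n : ℕ => ((n : ℝ≥0∞) + 1)⁻¹) atTop (nhds 0) := by
      have h1 : Tendsto (fun n : ℕ => ((n + 1 : ℕ) : ℝ≥0∞)⁻¹) atTop (nhds 0) :=
        (ENNReal.tendsto_inv_nat_nhds_zero).comp (tendsto_add_atTop_nat 1)
      convert h1 using 2 with n
      push_cast
      ring
    exact tendsto_of_tendsto_of_tendsto_of_le_of_le tendsto_const_nhds hinv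
      (fun n => zero_le) hb
  exact htend.limsup_eq

end EntDimAux

namespace EntDim
open EntDimAux Filter Set

attribute [local instance] Classical.propDecidable

/-- **Fact A.** If `0 < τ < D̲^p_μ(T,α)` then there are an increasing
sequence `F = {f 0 < f 1 < ⋯}` of positive integers and `d > 0` with `D̄(F) ≥ τ` and
`H_μ(⋁_{i=m₁}^{m₂} T^{-f i} α) ≥ (m₂+1-m₁)·d` for all `m₁ ≤ m₂`; in particular `F`
is an entropy generating sequence of `α`. -/
theorem exists_entGenSeq_of_lt_lowerPosDimPart {X : Type*} [MeasurableSpace X]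
    (μ : Measure X) [IsProbabilityMeasure μ] (T : X → X) (hT : MeasurePreserving T μ μ)
    {k : ℕ} (P : Fin k → Set X) (hP : IsPartition P)
    (τ : ℝ) (hτ0 : 0 < τ) (hτ : τ < lowerPosDimPart μ T P) :
    ∃ (f : ℕ → ℕ) (d : ℝ), IsPosSeq f ∧ 0 < d ∧ τ ≤ upperDim f ∧
      (∀ m1 m2 : ℕ, m1 ≤ m2 →
        ((m2 - m1 + 1 : ℕ) : ℝ) * d ≤ finJoinEnt μ T P f (Finset.Icc m1 m2)) ∧
      IsEntGenSeq μ T P f := by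
  classical
  -- Step 1: extract a positive entropy sequence `s` with `τ < lowerDim s`.
  set Dset := {d : ℝ | ∃ s : ℕ → ℕ, IsPosEntSeq μ T P s ∧ d = lowerDim s} with hDset
  have hne : Dset.Nonempty := by
    by_contra h
    rw [Set.not_nonempty_iff_eq_empty] at h
    rw [lowerPosDimPart, ← hDset, h, Real.sSup_empty] at hτ
    linarith
  have hτ' : τ < sSup Dset := hτ
  obtain ⟨d0, hd0mem, hτs0⟩ := exists_lt_of_lt_csSup hne hτ'
  obtain ⟨s, hsPos, rfl⟩ := hd0mem
  obtain ⟨hsSeq, hsLim⟩ := hsPos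
  have hτs : τ < lowerDim s := hτs0
  -- Step 2: set up the partitions along `s`.
  have hTm : Measurable T := hT.measurable
  set R : ℕ → (Fin k) → Set X := fun j a => T^[s j] ⁻¹' P a with hRdef
  have hR : ∀ j, IsPartition (R j) := fun j =>
    EntDimAux.IsPartition.preimage hP (hTm.iterate (s j))
  set L := Real.log (Fintype.card (Fin k)) with hLdef
  have hL0 : 0 ≤ L := by rw [hLdef, Fintype.card_fin]; exact log_card_nonneg k
  have hseq : ∀ n, seqJoinEnt μ T P s n = EJ μ R (Finset.range n) := fun n => rfl
  -- Step 3: frequently `2 c n ≤ H_n`.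
  set u : ℕ → ℝ := fun n => seqJoinEnt μ T P s n / n with hu
  have hu0 : ∀ n, 0 ≤ u n := fun n =>
    div_nonneg (by rw [hseq n]; exact EJ_nonneg μ R _) (Nat.cast_nonneg n)
  set L0 := Filter.atTop.limsup u with hL0def
  have hL0pos : 0 < L0 := hsLim
  have hfreq : ∃ᶠ n in atTop, L0 / 2 ≤ u n := by
    by_contra h
    rw [Filter.not_frequently] at h
    have hev : ∀ᶠ n in atTop, u n ≤ L0 / 2 := h.mono fun n hn => le_of_not_ge hn
    have hb : L0 ≤ L0 / 2 := by
      rw [hL0def, Filter.limsup_eq]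
      apply csInf_le
      · refine ⟨0, fun a ha => ?_⟩
        obtain ⟨n, hn⟩ := ha.exists
        exact le_trans (hu0 n) hn
      · exact hev
    linarith
  set c := L0 / 4 with hcdef
  have hcpos : 0 < c := by rw [hcdef]; linarith
  have hfreq2 : ∃ᶠ n in atTop, (1 ≤ n ∧ 2 * c * n ≤ EJ μ R (Finset.range n)) := by
    refine (hfreq.and_eventually (Filter.eventually_ge_atTop 1)).mono ?_
    rintro n ⟨h1, h2⟩
    refine ⟨h2, ?_⟩
    have hnpos : (0:ℝ) < n := by exact_mod_cast h2
    have h3 : L0 / 2 * n ≤ u n * n := mul_le_mul_of_nonneg_right h1 (le_of_lt hnpos)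
    rw [hu] at h3
    rw [div_mul_cancel₀ _ (ne_of_gt hnpos)] at h3
    rw [← hseq n]
    calc 2 * c * n = L0 / 2 * n := by rw [hcdef]; ring
      _ ≤ seqJoinEnt μ T P s n := h3
  -- Step 4: `L > 0`.
  obtain ⟨n₀, hn₀1, hn₀⟩ := hfreq2.exists
  have hLpos : 0 < L := by
    have h1 : EJ μ R (Finset.range n₀) ≤ n₀ * L := by
      have := EJ_card_le μ hR (Finset.range n₀)
      rwa [Finset.card_range, ← hLdef] at this
    have hn₀r : (1:ℝ) ≤ n₀ := by exact_mod_cast hn₀1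
    nlinarith
  -- Step 5: the selected indices.
  set p : ℕ → Prop := fun j => c ≤ bInc μ R j with hpdef
  have hnK0 : ∀ n, 2 * c * n ≤ EJ μ R (Finset.range n) →
      c * n ≤ L * Nat.count p n := fun n hn => count_large_bInc μ hR hcpos hn
  set K := ⌈L / c⌉₊ + 1 with hKdef
  have hKpos : 0 < K := Nat.succ_pos _
  have hLK : L ≤ c * K := by
    have h1 : L / c ≤ (⌈L / c⌉₊ : ℝ) := Nat.le_ceil _
    have h2 : ((⌈L / c⌉₊ : ℕ) : ℝ) ≤ K := by exact_mod_cast Nat.le_succ _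
    have h3 : L / c ≤ (K : ℝ) := le_trans h1 h2
    calc L = c * (L / c) := by field_simp
      _ ≤ c * K := mul_le_mul_of_nonneg_left h3 hcpos.le
  have hnK : ∀ n, 2 * c * n ≤ EJ μ R (Finset.range n) → n ≤ K * Nat.count p n := by
    intro n hn
    have h1 := hnK0 n hn
    have h2 : c * n ≤ c * (K * Nat.count p n : ℕ) := by
      calc c * n ≤ L * Nat.count p n := h1
        _ ≤ (c * K) * Nat.count p n :=
          mul_le_mul_of_nonneg_right hLK (Nat.cast_nonneg _)
        _ = c * (K * Nat.count p n : ℕ) := by push_cast; ring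
    have h3 : (n : ℝ) ≤ (K * Nat.count p n : ℕ) :=
      le_of_mul_le_mul_left h2 hcpos
    exact_mod_cast h3
  -- Step 6: infinitude of the selected set.
  have hpinf : (setOf p).Infinite := by
    by_contra h
    rw [Set.not_infinite] at h
    obtain ⟨B, hB⟩ := h.bddAbove
    have hcnt : ∀ n, Nat.count p n ≤ B + 1 := by
      intro n
      rw [Nat.count_eq_card_filter_range]
      calc (Finset.filter p (Finset.range n)).card
          ≤ (Finset.range (B + 1)).card := by
            apply Finset.card_le_card
            intro j hj
            rw [Finset.mem_filter] at hj
            exact Finset.mem_range.2 (Nat.lt_succ_of_le (hB hj.2))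
        _ = B + 1 := Finset.card_range _
    obtain ⟨n, hnprop, hnge⟩ :=
      (hfreq2.and_eventually (Filter.eventually_ge_atTop (K * (B + 1) + 1))).exists
    have h1 := hnK n hnprop.2
    have h2 := hcnt n
    have h3 : K * Nat.count p n ≤ K * (B + 1) := Nat.mul_le_mul_left K h2
    exact lt_irrefl n (lt_of_le_of_lt (le_trans h1 h3) (Nat.lt_of_succ_le hnge))
  set e := Nat.nth p with hedef
  have heSM : StrictMono e := Nat.nth_strictMono hpinf
  have hpe : ∀ i, c ≤ bInc μ R (e i) := fun i => Nat.nth_mem_of_infinite hpinf i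
  set f := fun i => s (e i) with hfdef
  have hfSM : StrictMono f := hsSeq.1.comp heSM
  have hf0 : 0 < f 0 := lt_of_lt_of_le hsSeq.2 (hsSeq.1.monotone (Nat.zero_le _))
  have hfge : ∀ n, n + 1 ≤ f n := by
    intro n
    have h1 : n ≤ e n := heSM.le_apply
    have h2 := isPosSeq_succ_le hsSeq (e n)
    show n + 1 ≤ s (e n)
    omega
  have hfPos : IsPosSeq f := ⟨hfSM, hf0⟩
  -- Step 7: block lower bounds.
  have hblockEJ : ∀ A : Finset ℕ, (A.card : ℝ) * c ≤ EJ μ (fun j => R (e j)) A :=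
    fun A => EJ_block_ge μ hR heSM hpe A
  have hfin : ∀ F : Finset ℕ, finJoinEnt μ T P f F = EJ μ (fun j => R (e j)) F :=
    fun F => rfl
  have hblock : ∀ m1 m2 : ℕ, m1 ≤ m2 →
      ((m2 - m1 + 1 : ℕ) : ℝ) * c ≤ finJoinEnt μ T P f (Finset.Icc m1 m2) := by
    intro m1 m2 h12
    have h2 := hblockEJ (Finset.Icc m1 m2)
    rw [Nat.card_Icc] at h2
    have h3 : m2 + 1 - m1 = m2 - m1 + 1 := by omega
    rw [h3] at h2
    rw [hfin]
    exact h2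
  -- Step 8: `f` is an entropy generating sequence.
  have hub : ∀ n, seqJoinEnt μ T P f n / n ≤ L := by
    intro n
    rcases Nat.eq_zero_or_pos n with rfl | hn
    · simpa using hL0
    · have h1 : seqJoinEnt μ T P f n = EJ μ (fun j => R (e j)) (Finset.range n) := rfl
      have h2 := EJ_card_le μ (fun j => hR (e j)) (Finset.range n)
      rw [Finset.card_range, ← hLdef] at h2
      have hnpos : (0:ℝ) < n := by exact_mod_cast hn
      rw [h1, div_le_iff₀ hnpos]
      calc EJ μ (fun j => R (e j)) (Finset.range n) ≤ n * L := h2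
        _ = L * n := by ring
  have hgen : IsEntGenSeq μ T P f := by
    refine ⟨hfPos, ?_⟩
    have hev : ∀ᶠ n in atTop, c ≤ seqJoinEnt μ T P f n / n := by
      filter_upwards [Filter.eventually_ge_atTop 1] with n hn
      have hIcc : Finset.range n = Finset.Icc 0 (n - 1) := by
        rw [Finset.range_eq_Ico, ← Finset.Ico_add_one_right_eq_Icc]
        congr 1
        omega
      have h1 := hblock 0 (n - 1) (Nat.zero_le _)
      have h2 : (n - 1 - 0 + 1 : ℕ) = n := by omega
      rw [h2] at h1
      have hnpos : (0:ℝ) < n := by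
        have : (1:ℝ) ≤ n := by exact_mod_cast hn
        linarith
      rw [seqJoinEnt, hIcc, le_div_iff₀ hnpos]
      calc c * n = (n : ℝ) * c := by ring
        _ ≤ finJoinEnt μ T P f (Finset.Icc 0 (n - 1)) := h1
    rw [Filter.liminf_eq]
    apply lt_of_lt_of_le hcpos
    apply le_csSup
    · refine ⟨L, fun a ha => ?_⟩
      obtain ⟨n, hn⟩ := ha.exists
      exact le_trans hn (hub n)
    · exact hev
  -- Step 9: `τ ≤ upperDim f`.
  have hdim : τ ≤ upperDim f := by
    rw [upperDim]
    apply le_csInf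
    · exact ⟨2, by norm_num, dimExprSup_two_eq_zero hfge⟩
    · rintro τ' ⟨hτ'0, hτ'sup⟩
      by_contra hlt
      push_neg at hlt
      -- `τ' < τ < lowerDim s`, so the liminf expression for `s` at `τ'` is nonzero.
      have hSinf : dimExprInf s τ' ≠ 0 := by
        intro h0
        have hmem : τ' ∈ {t : ℝ | 0 ≤ t ∧ dimExprInf s t = 0} := ⟨hτ'0, h0⟩
        have h1 : lowerDim s ≤ τ' := csInf_le ⟨0, fun x hx => hx.1⟩ hmem
        linarith
      set δ := dimExprInf s τ' with hδdef
      have hδpos : 0 < δ := pos_iff_ne_zero.2 hSinf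
      set η := min δ 1 / 2 with hηdef
      have hmin0 : min δ 1 ≠ 0 := by
        simp only [ne_eq, min_eq_iff]
        push_neg
        constructor
        · rintro h1; exact absurd h1 hSinf
        · rintro h1; exact absurd h1 one_ne_zero
      have hmintop : min δ 1 ≠ ⊤ := ne_top_of_le_ne_top ENNReal.one_ne_top (min_le_right _ _)
      have hη0 : η ≠ 0 := by
        rw [hηdef]
        simp [ENNReal.div_eq_zero_iff, hmin0]
      have hηlt : η < δ :=
        lt_of_lt_of_le (ENNReal.half_lt_self hmin0 hmintop) (min_le_left _ _)
      have hev : ∀ᶠ n : ℕ in atTop, η < ((n : ℝ≥0∞) + 1) / ((s n : ℕ) : ℝ≥0∞) ^ τ' :=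
        Filter.eventually_lt_of_lt_liminf hηlt
      set γ := η / (2 * K) with hγdef
      have hγ0 : γ ≠ 0 := by
        rw [hγdef]
        simp only [ne_eq, ENNReal.div_eq_zero_iff, not_or]
        refine ⟨hη0, ?_⟩
        exact ENNReal.mul_ne_top (by norm_num) (ENNReal.natCast_ne_top K)
      have hfreq3 : ∃ᶠ i : ℕ in atTop, γ ≤ ((i : ℝ≥0∞) + 1) / ((f i : ℕ) : ℝ≥0∞) ^ τ' := by
        rw [Filter.frequently_atTop]
        intro N
        obtain ⟨n, hnA, hnB, hnC⟩ :
            ∃ n : ℕ, (1 ≤ n ∧ 2 * c * n ≤ EJ μ R (Finset.range n)) ∧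
              (η < ((n : ℝ≥0∞) + 1) / ((s n : ℕ) : ℝ≥0∞) ^ τ') ∧
              K * (N + 1) + 1 ≤ n := by
          obtain ⟨n, h1, h2, h3⟩ :=
            (hfreq2.and_eventually (hev.and (Filter.eventually_ge_atTop
              (K * (N + 1) + 1)))).exists
          exact ⟨n, h1, h2, h3⟩
        set m := Nat.count p n with hmdef
        have hnKm : n ≤ K * m := hnK n hnA.2
        have hm1 : N + 1 < m := by
          have h1 : K * (N + 1) < K * m :=
            lt_of_lt_of_le (Nat.lt_of_succ_le hnC) hnKm
          exact Nat.lt_of_mul_lt_mul_left h1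
        refine ⟨m - 1, by omega, ?_⟩
        have hmpos : 1 ≤ m := by omega
        have hei : e (m - 1) < n := Nat.nth_lt_of_lt_count (by omega)
        have hfi : f (m - 1) ≤ s n := le_of_lt (hsSeq.1 hei)
        have hX : ((f (m - 1) : ℕ) : ℝ≥0∞) ^ τ' ≤ ((s n : ℕ) : ℝ≥0∞) ^ τ' :=
          ENNReal.rpow_le_rpow (by exact_mod_cast hfi) hτ'0
        have hnum : (n : ℕ) + 1 ≤ 2 * K * m := by
          have h1 : 1 ≤ n := hnA.1
          calc n + 1 ≤ K * m + K * m := Nat.add_le_add hnKm (le_trans h1 hnKm)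
            _ = 2 * K * m := by ring
        have step1 : ((n : ℝ≥0∞) + 1) / ((s n : ℕ) : ℝ≥0∞) ^ τ'
            ≤ ((2 * K * m : ℕ) : ℝ≥0∞) / ((s n : ℕ) : ℝ≥0∞) ^ τ' := by
          apply ENNReal.div_le_div_right
          have : ((n + 1 : ℕ) : ℝ≥0∞) ≤ ((2 * K * m : ℕ) : ℝ≥0∞) := by
            exact_mod_cast hnum
          push_cast at this ⊢
          exact this
        have step2 : ((2 * K * m : ℕ) : ℝ≥0∞) / ((s n : ℕ) : ℝ≥0∞) ^ τ'
            ≤ ((2 * K * m : ℕ) : ℝ≥0∞) / ((f (m - 1) : ℕ) : ℝ≥0∞) ^ τ' :=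
          ENNReal.div_le_div le_rfl hX
        have step3 : ((2 * K * m : ℕ) : ℝ≥0∞) / ((f (m - 1) : ℕ) : ℝ≥0∞) ^ τ'
            = (2 * (K : ℝ≥0∞)) * (((m : ℕ) : ℝ≥0∞) / ((f (m - 1) : ℕ) : ℝ≥0∞) ^ τ') := by
          rw [show ((2 * K * m : ℕ) : ℝ≥0∞) = (2 * (K : ℝ≥0∞)) * (m : ℕ) by
            push_cast; ring, mul_div_assoc]
        have hη2 : η ≤ (2 * (K : ℝ≥0∞)) *
            (((m : ℕ) : ℝ≥0∞) / ((f (m - 1) : ℕ) : ℝ≥0∞) ^ τ') := by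
          calc η ≤ ((n : ℝ≥0∞) + 1) / ((s n : ℕ) : ℝ≥0∞) ^ τ' := le_of_lt hnB
            _ ≤ ((2 * K * m : ℕ) : ℝ≥0∞) / ((s n : ℕ) : ℝ≥0∞) ^ τ' := step1
            _ ≤ ((2 * K * m : ℕ) : ℝ≥0∞) / ((f (m - 1) : ℕ) : ℝ≥0∞) ^ τ' := step2
            _ = _ := step3
        have hcast : ((m - 1 : ℕ) : ℝ≥0∞) + 1 = ((m : ℕ) : ℝ≥0∞) := by
          have : (m - 1 : ℕ) + 1 = m := by omega
          rw [← this]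
          push_cast
          ring
        rw [hγdef, hcast]
        exact ENNReal.div_le_of_le_mul' hη2
      have hlimsup : γ ≤ dimExprSup f τ' := le_limsup_of_frequently_le' hfreq3
      rw [hτ'sup] at hlimsup
      exact hγ0 (le_antisymm hlimsup zero_le)
  exact ⟨f, c, hfPos, hcpos, hdim, hblock, hgen⟩

end EntDim
end
end
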